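/- arXiv:2303.06805 — 3 statements merged into one kernel-verified Lean document; each statement's English description precedes it below -/
import Mathlib

section
/- For the monic matrix-valued orthogonal polynomials P(·,n) with respect to the Laguerre-type weight W^{(ν)} (the case φ(x) = x), the following difference–differential relations hold for all x > 0: for every n ≥ 0, x ∂_x P(x,n) + x P(x,n)(A−1) = (A−1) P(x,n+1) − (n+1+ν) P(x,n) − H(n) J H(n)^{−1} P(x,n); and for every n ≥ 1, −x ∂_x P(x,n) − P(x,n)(1+ν+J) = −(n+ν+J+1) P(x,n) + H(n)(A−1)^* H(n−1)^{−1} P(x,n−1), while for n = 0, −x ∂_x P(x,0) − P(x,0)(1+ν+J) = −(ν+J+1) P(x,0). -/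
open MeasureTheory Matrix Polynomial Filter
open scoped ComplexOrder

attribute [local instance] Matrix.normedAddCommGroup Matrix.normedSpace

noncomputable section

abbrev MatC (N : ℕ) := Matrix (Fin N) (Fin N) ℂ
abbrev MatPoly (N : ℕ) := Matrix (Fin N) (Fin N) (Polynomial ℂ)

/-- `J = Σ_{k=1}^N k E_{k,k}`. -/
def Jmat (N : ℕ) : MatC N := Matrix.diagonal fun k => ((k : ℕ) + 1 : ℂ)

/-- `A = Σ_{k=1}^{N-1} a_k E_{k+1,k}`. -/
def Amat (N : ℕ) (a : ℕ → ℝ) : MatC N :=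
  Matrix.of fun i j => if (i : ℕ) = (j : ℕ) + 1 then ((a ((j : ℕ) + 1) : ℝ) : ℂ) else 0

/-- evaluation of a matrix polynomial at a real point -/
def pEval {N : ℕ} (P : MatPoly N) (x : ℝ) : MatC N := P.map fun q => q.eval (x : ℂ)

/-- entrywise derivative of a matrix polynomial -/
def pDeriv {N : ℕ} (P : MatPoly N) : MatPoly N := P.map fun q => Polynomial.derivative q

/-- the coefficient of `x^k` in a matrix polynomial -/
def pCoeff {N : ℕ} (P : MatPoly N) (k : ℕ) : MatC N := Matrix.of fun i j => (P i j).coeff k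

/-- `T^{(ν)}(x) = e^{-x} Σ_{k=1}^N δ_k x^{ν+k} E_{k,k}`. -/
def Tmat (N : ℕ) (ν : ℝ) (δ : ℕ → ℝ) (x : ℝ) : MatC N :=
  Matrix.diagonal fun k =>
    ((Real.exp (-x) * δ ((k : ℕ) + 1) * x ^ (ν + ((k : ℕ) : ℝ) + 1) : ℝ) : ℂ)

/-- `W^{(ν)}(x) = e^{xA} T^{(ν)}(x) e^{xA^*}`. -/
def Wmat (N : ℕ) (a : ℕ → ℝ) (ν : ℝ) (δ : ℕ → ℝ) (x : ℝ) : MatC N :=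
  NormedSpace.exp ((x : ℂ) • Amat N a) * Tmat N ν δ x *
    NormedSpace.exp ((x : ℂ) • (Amat N a)ᴴ)
namespace DDR

variable {N : ℕ}

/-- constant matrix polynomial -/
def matC (M : MatC N) : MatPoly N := M.map Polynomial.C

@[simp] lemma matC_apply (M : MatC N) (i j : Fin N) : matC M i j = Polynomial.C (M i j) := rfl

lemma matC_mul (M M' : MatC N) : matC (M * M') = matC M * matC M' := by
  ext i j
  simp [matC, Matrix.mul_apply, Matrix.map_apply]

@[simp] lemma matC_one : (matC (1 : MatC N)) = 1 := by
  ext i j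
  by_cases h : i = j <;> simp [matC, Matrix.one_apply, h]

lemma matC_add (M M' : MatC N) : matC (M + M') = matC M + matC M' := by
  ext i j; simp [matC]

lemma matC_sub (M M' : MatC N) : matC (M - M') = matC M - matC M' := by
  ext i j; simp [matC]

@[simp] lemma pEval_matC (M : MatC N) (x : ℝ) : pEval (matC M) x = M := by
  ext i j; simp [pEval, matC]

lemma pEval_apply (Q : MatPoly N) (x : ℝ) (i j : Fin N) :
    pEval Q x i j = (Q i j).eval (x : ℂ) := rfl

lemma pEval_mul (Q R : MatPoly N) (x : ℝ) : pEval (Q * R) x = pEval Q x * pEval R x := by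
  ext i j
  simp [pEval, Matrix.mul_apply, Polynomial.eval_finset_sum]

lemma pEval_add (Q R : MatPoly N) (x : ℝ) : pEval (Q + R) x = pEval Q x + pEval R x := by
  ext i j; simp [pEval]

lemma pEval_sub (Q R : MatPoly N) (x : ℝ) : pEval (Q - R) x = pEval Q x - pEval R x := by
  ext i j; simp [pEval]

@[simp] lemma pEval_zero (x : ℝ) : pEval (0 : MatPoly N) x = 0 := by
  ext i j; simp [pEval]

@[simp] lemma pEval_one (x : ℝ) : pEval (1 : MatPoly N) x = 1 := by
  ext i j; by_cases h : i = j <;> simp [pEval, Matrix.one_apply, h]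

lemma pEval_smul (q : Polynomial ℂ) (Q : MatPoly N) (x : ℝ) :
    pEval (q • Q) x = q.eval (x : ℂ) • pEval Q x := by
  ext i j; simp [pEval, Matrix.smul_apply, smul_eq_mul]

lemma pEval_X_smul (Q : MatPoly N) (x : ℝ) :
    pEval ((Polynomial.X : Polynomial ℂ) • Q) x = (x : ℂ) • pEval Q x := by
  simp [pEval_smul]

lemma pEval_sum {α : Type*} (s : Finset α) (f : α → MatPoly N) (x : ℝ) :
    pEval (∑ j ∈ s, f j) x = ∑ j ∈ s, pEval (f j) x := by
  classical
  induction s using Finset.induction_on with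
  | empty => simp
  | insert _ _ h ih => rw [Finset.sum_insert h, pEval_add, ih, Finset.sum_insert h]

lemma pDeriv_apply (Q : MatPoly N) (i j : Fin N) :
    pDeriv Q i j = Polynomial.derivative (Q i j) := rfl

lemma pDeriv_mul (Q R : MatPoly N) : pDeriv (Q * R) = pDeriv Q * R + Q * pDeriv R := by
  ext i j
  simp [pDeriv, Matrix.mul_apply, Polynomial.derivative_mul, Finset.sum_add_distrib]

lemma pDeriv_add (Q R : MatPoly N) : pDeriv (Q + R) = pDeriv Q + pDeriv R := by
  ext i j; simp [pDeriv]

@[simp] lemma pDeriv_matC (M : MatC N) : pDeriv (matC M) = 0 := by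
  ext i j; simp [pDeriv, matC]

lemma pCoeff_apply (Q : MatPoly N) (k : ℕ) (i j : Fin N) :
    pCoeff Q k i j = (Q i j).coeff k := rfl

lemma pCoeff_add (Q R : MatPoly N) (k : ℕ) :
    pCoeff (Q + R) k = pCoeff Q k + pCoeff R k := by
  ext i j; simp [pCoeff]

lemma pCoeff_mul_matC (Q : MatPoly N) (M : MatC N) (k : ℕ) :
    pCoeff (Q * matC M) k = pCoeff Q k * M := by
  ext i j
  simp [pCoeff, Matrix.mul_apply, Polynomial.finset_sum_coeff]

lemma pCoeff_matC_mul (Q : MatPoly N) (M : MatC N) (k : ℕ) :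
    pCoeff (matC M * Q) k = M * pCoeff Q k := by
  ext i j
  simp [pCoeff, Matrix.mul_apply, Polynomial.finset_sum_coeff]

lemma pCoeff_sum {α : Type*} (s : Finset α) (f : α → MatPoly N) (k : ℕ) :
    pCoeff (∑ j ∈ s, f j) k = ∑ j ∈ s, pCoeff (f j) k := by
  classical
  induction s using Finset.induction_on with
  | empty => ext i j; simp [pCoeff]
  | insert _ _ h ih => rw [Finset.sum_insert h, pCoeff_add, ih, Finset.sum_insert h]

lemma pCoeff_X_smul (Q : MatPoly N) (k : ℕ) :
    pCoeff ((Polynomial.X : Polynomial ℂ) • Q) (k + 1) = pCoeff Q k := by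
  ext i j
  simp [pCoeff, Matrix.smul_apply, Polynomial.coeff_X_mul]

@[simp] lemma pCoeff_X_smul_zero (Q : MatPoly N) :
    pCoeff ((Polynomial.X : Polynomial ℂ) • Q) 0 = 0 := by
  ext i j
  simp [pCoeff, Matrix.smul_apply]

lemma pCoeff_pDeriv (Q : MatPoly N) (k : ℕ) :
    pCoeff (pDeriv Q) k = ((k : ℂ) + 1) • pCoeff Q (k + 1) := by
  ext i j
  simp [pCoeff, pDeriv, Polynomial.coeff_derivative, mul_comm]

end DDR
namespace DDR

/-- scalar building block `e^{-x} x^s p(x)` -/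
def fcl (s : ℝ) (p : Polynomial ℂ) (x : ℝ) : ℂ :=
  ((Real.exp (-x) * x ^ s : ℝ) : ℂ) * p.eval (x : ℂ)

lemma fcl_add (s : ℝ) (p q : Polynomial ℂ) (x : ℝ) :
    fcl s (p + q) x = fcl s p x + fcl s q x := by
  simp [fcl, mul_add]

lemma fcl_integrableOn {s : ℝ} (hs : 0 < s) (p : Polynomial ℂ) :
    IntegrableOn (fcl s p) (Set.Ioi (0 : ℝ)) := by
  induction p using Polynomial.induction_on' with
  | add p q hp hq =>
      exact MeasureTheory.IntegrableOn.congr_fun (hp.add hq)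
        (fun x _ => (fcl_add s p q x).symm) measurableSet_Ioi
  | monomial n c =>
      have base : IntegrableOn (fun x : ℝ => Real.exp (-x) * x ^ (s + n)) (Set.Ioi 0) := by
        have := Real.GammaIntegral_convergent (s := s + n + 1) (by positivity)
        simpa using this
      have base' : IntegrableOn (fun x : ℝ => c * ((Real.exp (-x) * x ^ (s + n) : ℝ) : ℂ))
          (Set.Ioi 0) := (base.ofReal.const_mul c)
      refine base'.congr_fun (fun x hx => ?_) measurableSet_Ioi
      have hx0 : (0 : ℝ) < x := hx
      simp only [fcl, Polynomial.eval_monomial]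
      rw [Real.rpow_add hx0, Real.rpow_natCast]
      push_cast
      ring

lemma fcl_tendsto_atTop (s : ℝ) (p : Polynomial ℂ) :
    Filter.Tendsto (fcl s p) Filter.atTop (nhds 0) := by
  induction p using Polynomial.induction_on' with
  | add p q hp hq =>
      have := hp.add hq
      rw [add_zero] at this
      exact this.congr (fun x => (fcl_add s p q x).symm)
  | monomial n c =>
      have base : Filter.Tendsto (fun x : ℝ => x ^ (s + n) * Real.exp (-1 * x))
          Filter.atTop (nhds 0) :=
        tendsto_rpow_mul_exp_neg_mul_atTop_nhds_zero (s + n) 1 one_pos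
      have base2 : Filter.Tendsto (fun x : ℝ => c * ((x ^ (s + n) * Real.exp (-1 * x) : ℝ) : ℂ))
          Filter.atTop (nhds 0) := by
        have h2 : Filter.Tendsto (fun x : ℝ => ((x ^ (s + n) * Real.exp (-1 * x) : ℝ) : ℂ))
            Filter.atTop (nhds ((0:ℝ):ℂ)) := (Complex.continuous_ofReal.tendsto 0).comp base
        rw [Complex.ofReal_zero] at h2
        simpa using h2.const_mul c
      apply base2.congr'
      filter_upwards [Filter.eventually_gt_atTop (0 : ℝ)] with x hx
      simp only [fcl, Polynomial.eval_monomial]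
      rw [Real.rpow_add hx, Real.rpow_natCast]
      push_cast
      ring

lemma fcl_zero_at_zero {s : ℝ} (hs : 0 < s) (p : Polynomial ℂ) : fcl s p 0 = 0 := by
  simp [fcl, Real.zero_rpow hs.ne']

lemma fcl_continuousWithinAt {s : ℝ} (hs : 0 < s) (p : Polynomial ℂ) :
    ContinuousWithinAt (fcl s p) (Set.Ici (0 : ℝ)) 0 := by
  apply ContinuousAt.continuousWithinAt
  apply ContinuousAt.mul
  · apply Complex.continuous_ofReal.continuousAt.comp
    exact ((Real.continuous_exp.comp continuous_neg).continuousAt).mul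
      (Real.continuousAt_rpow_const 0 s (Or.inr hs.le))
  · exact (p.continuous_aeval.continuousAt).comp
      Complex.continuous_ofReal.continuousAt

lemma fcl_hasDerivAt (s : ℝ) (p : Polynomial ℂ) {x : ℝ} (hx : 0 < x) :
    HasDerivAt (fcl (s + 1) p)
      (fcl s (Polynomial.C ((s : ℂ) + 1) * p
        + Polynomial.X * (Polynomial.derivative p - p)) x) x := by
  have h1 : HasDerivAt (fun y : ℝ => Real.exp (-y) * y ^ (s + 1))
      (-(Real.exp (-x)) * x ^ (s + 1) + Real.exp (-x) * ((s + 1) * x ^ s)) x := by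
    have he : HasDerivAt (fun y : ℝ => Real.exp (-y)) (-(Real.exp (-x))) x := by
      simpa using (hasDerivAt_neg x).exp
    have hr : HasDerivAt (fun y : ℝ => y ^ (s + 1)) ((s + 1) * x ^ s) x := by
      have := Real.hasDerivAt_rpow_const (x := x) (p := s + 1) (Or.inl hx.ne')
      simpa using this
    exact he.mul hr
  have h2 : HasDerivAt (fun y : ℝ => p.eval (y : ℂ))
      ((Polynomial.derivative p).eval (x : ℂ)) x :=
    (p.hasDerivAt (x : ℂ)).comp_ofReal
  have := (h1.ofReal_comp).mul h2
  convert this using 1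
  · rfl
  · rfl
  simp only [fcl]
  push_cast
  rw [Real.rpow_add_one hx.ne' s]
  push_cast
  simp only [Polynomial.eval_add, Polynomial.eval_mul, Polynomial.eval_sub, Polynomial.eval_C,
    Polynomial.eval_X]
  ring

lemma fcl_ftc {s : ℝ} (hs : 0 < s) (p : Polynomial ℂ) :
    ∫ x in Set.Ioi (0 : ℝ),
      fcl s (Polynomial.C ((s : ℂ) + 1) * p
        + Polynomial.X * (Polynomial.derivative p - p)) x = 0 := by
  have := MeasureTheory.integral_Ioi_of_hasDerivAt_of_tendsto
    (f := fcl (s + 1) p)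
    (f' := fun x => fcl s (Polynomial.C ((s : ℂ) + 1) * p
        + Polynomial.X * (Polynomial.derivative p - p)) x)
    (a := 0) (m := 0)
    (fcl_continuousWithinAt (by linarith) p)
    (fun x hx => fcl_hasDerivAt s p hx)
    (fcl_integrableOn hs _)
    (fcl_tendsto_atTop (s + 1) p)
  rw [this, fcl_zero_at_zero (by linarith), sub_zero]

end DDR
namespace DDR

variable {N : ℕ} {a : ℕ → ℝ}

lemma Amat_pow_apply_ne (m : ℕ) :
    ∀ i j : Fin N, (Amat N a ^ m) i j ≠ 0 → (i : ℕ) = (j : ℕ) + m := by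
  induction m with
  | zero =>
      intro i j h
      rw [pow_zero] at h
      by_contra hij
      have : i ≠ j := fun hh => hij (by simp [hh])
      simp [Matrix.one_apply, this] at h
  | succ m ih =>
      intro i j h
      rw [pow_succ, Matrix.mul_apply] at h
      obtain ⟨l, hl⟩ := Finset.exists_ne_zero_of_sum_ne_zero h
      have h1 : (Amat N a ^ m) i l ≠ 0 := fun hz => hl.2 (by simp [hz])
      have h2 : Amat N a l j ≠ 0 := fun hz => hl.2 (by simp [hz])
      have e1 := ih i l h1
      have e2 : (l : ℕ) = (j : ℕ) + 1 := by
        by_contra hc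
        simp only [Amat, Matrix.of_apply, if_neg hc] at h2
        exact h2 rfl
      omega

lemma Amat_pow_eq_zero {m : ℕ} (hm : N ≤ m) : (Amat N a) ^ m = 0 := by
  ext i j
  by_contra h
  have := Amat_pow_apply_ne m i j h
  have : (i : ℕ) < N := i.isLt
  omega

/-- coefficient polynomial `x^n/n!` -/
def cx (n : ℕ) : Polynomial ℂ := Polynomial.C ((n.factorial : ℂ)⁻¹) * Polynomial.X ^ n

/-- truncated exponential as a matrix polynomial -/
def Bp (N : ℕ) (a : ℕ → ℝ) : MatPoly N :=
  ∑ n ∈ Finset.range N, cx n • matC (Amat N a ^ n)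

lemma pEval_cx_smul (n : ℕ) (M : MatC N) (x : ℝ) :
    pEval (cx n • matC M) x = (((n.factorial : ℂ)⁻¹) * (x : ℂ) ^ n) • M := by
  ext i j
  simp [pEval, cx, Matrix.smul_apply, matC, smul_eq_mul]
  ring

lemma exp_eq_pEval_Bp (x : ℝ) :
    NormedSpace.exp ((x : ℂ) • Amat N a) = pEval (Bp N a) x := by
  rw [NormedSpace.exp_eq_tsum ℂ]
  change (∑' (n : ℕ), ((n.factorial : ℂ)⁻¹) • ((x : ℂ) • Amat N a) ^ n) = _
  have hzero : ∀ n ∉ Finset.range N,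
      ((n.factorial : ℂ)⁻¹) • ((x : ℂ) • Amat N a) ^ n = 0 := by
    intro n hn
    rw [Finset.mem_range, not_lt] at hn
    rw [_root_.smul_pow, Amat_pow_eq_zero hn]
    simp
  rw [tsum_eq_sum hzero, Bp, pEval_sum]
  refine Finset.sum_congr rfl fun n _ => ?_
  rw [pEval_cx_smul, _root_.smul_pow, smul_smul]

lemma exp_conjTranspose_eq (x : ℝ) :
    NormedSpace.exp ((x : ℂ) • (Amat N a)ᴴ) = (pEval (Bp N a) x)ᴴ := by
  have h1 : ((x : ℂ) • (Amat N a)ᴴ) = star ((x : ℂ) • Amat N a) := by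
    rw [star_smul, Matrix.star_eq_conjTranspose]
    simp [Complex.conj_ofReal]
  rw [h1, ← NormedSpace.star_exp, exp_eq_pEval_Bp, Matrix.star_eq_conjTranspose]

lemma pDeriv_smul_matC (q : Polynomial ℂ) (M : MatC N) :
    pDeriv (q • matC M) = (Polynomial.derivative q) • matC M := by
  ext i j
  simp [pDeriv, Matrix.smul_apply, matC, smul_eq_mul, Polynomial.derivative_mul]

lemma pDeriv_sum {α : Type*} (s : Finset α) (f : α → MatPoly N) :
    pDeriv (∑ j ∈ s, f j) = ∑ j ∈ s, pDeriv (f j) := by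
  classical
  induction s using Finset.induction_on with
  | empty => ext i j; simp [pDeriv]
  | insert _ _ h ih => rw [Finset.sum_insert h, pDeriv_add, ih, Finset.sum_insert h]

lemma fact_inv_mul (n : ℕ) : (((n+1).factorial : ℂ))⁻¹ * ((n : ℂ) + 1) = ((n.factorial : ℂ))⁻¹ := by
  rw [Nat.factorial_succ]
  push_cast
  rw [mul_inv]
  have h1 : ((n : ℂ) + 1) ≠ 0 := by
    exact_mod_cast (Nat.cast_ne_zero (R := ℂ)).mpr (Nat.succ_ne_zero n)
  field_simp

lemma derivative_cx_succ (n : ℕ) :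
    Polynomial.derivative (cx (n + 1)) = cx n := by
  simp only [cx, Polynomial.derivative_mul, Polynomial.derivative_C, Polynomial.derivative_X_pow,
    zero_mul, zero_add, Nat.add_sub_cancel]
  rw [← mul_assoc, ← Polynomial.C_mul]
  push_cast
  rw [fact_inv_mul]

/-- P1 : derivative of `Bp` -/
lemma pDeriv_Bp (hN : 1 ≤ N) : pDeriv (Bp N a) = matC (Amat N a) * Bp N a := by
  obtain ⟨M, rfl⟩ : ∃ M, N = M + 1 := ⟨N - 1, by omega⟩
  rw [Bp, pDeriv_sum, Finset.mul_sum]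
  have rhse : ∀ n, matC (Amat (M+1) a) * (cx n • matC (Amat (M + 1) a ^ n))
      = cx n • matC (Amat (M + 1) a ^ (n + 1)) := by
    intro n
    rw [Matrix.mul_smul, ← matC_mul, ← pow_succ']
  rw [Finset.sum_congr rfl fun n _ => rhse n]
  rw [Finset.sum_congr rfl fun n _ => pDeriv_smul_matC (cx n) (Amat (M+1) a ^ n)]
  rw [Finset.sum_range_succ' (fun n => (Polynomial.derivative (cx n)) • matC (Amat (M + 1) a ^ n)) M]
  rw [Finset.sum_range_succ (fun n => cx n • matC (Amat (M + 1) a ^ (n + 1))) M]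
  have top : cx M • matC (Amat (M + 1) a ^ (M + 1)) = 0 := by
    rw [Amat_pow_eq_zero (le_refl (M + 1))]
    ext i j; simp [matC]
  have bot : (Polynomial.derivative (cx 0)) • matC (Amat (M + 1) a ^ 0) = 0 := by
    ext i j; simp [cx, matC]
  rw [top, bot, add_zero, add_zero]
  exact Finset.sum_congr rfl fun n _ => by rw [derivative_cx_succ]

lemma J_mul_Amat : Jmat N * Amat N a = Amat N a * Jmat N + Amat N a := by
  ext i j
  by_cases h : (i : ℕ) = (j : ℕ) + 1
  · simp only [Jmat, Matrix.diagonal_mul, Matrix.mul_diagonal, Matrix.add_apply, Amat,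
      Matrix.of_apply, if_pos h]
    have : ((i : ℕ) : ℂ) = ((j : ℕ) : ℂ) + 1 := by exact_mod_cast congrArg (Nat.cast (R := ℂ)) h
    rw [this]; ring
  · simp only [Jmat, Matrix.diagonal_mul, Matrix.mul_diagonal, Matrix.add_apply, Amat,
      Matrix.of_apply, if_neg h]
    ring

lemma J_mul_Amat_pow (n : ℕ) :
    Jmat N * (Amat N a) ^ n = (Amat N a) ^ n * Jmat N + (n : ℂ) • (Amat N a) ^ n := by
  induction n with
  | zero => simp
  | succ n ih =>
      rw [pow_succ, ← mul_assoc, ih, add_mul, smul_mul_assoc, mul_assoc, J_mul_Amat]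
      rw [mul_add, ← mul_assoc, ← pow_succ]
      push_cast
      rw [add_smul, one_smul]
      abel

lemma smul_matC_smul (c : ℂ) (q : Polynomial ℂ) (M : MatC N) :
    q • matC (c • M) = (Polynomial.C c * q) • matC M := by
  ext i j
  simp only [Matrix.smul_apply, matC, Matrix.map_apply, smul_eq_mul]
  rw [Polynomial.C_mul]
  ring

/-- P2 : commutation of `J` past `Bp` -/
lemma J_comm_Bp (hN : 1 ≤ N) :
    matC (Jmat N) * Bp N a =
      Bp N a * matC (Jmat N) + (Polynomial.X : Polynomial ℂ) • (matC (Amat N a) * Bp N a) := by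
  obtain ⟨M, rfl⟩ : ∃ M, N = M + 1 := ⟨N - 1, by omega⟩
  set A := Amat (M + 1) a
  have key : ∀ n, matC (Jmat (M + 1)) * (cx n • matC (A ^ n))
      = cx n • matC (A ^ n) * matC (Jmat (M + 1))
        + (Polynomial.C (n : ℂ) * cx n) • matC (A ^ n) := by
    intro n
    rw [Matrix.mul_smul, ← matC_mul, J_mul_Amat_pow, matC_add, Matrix.smul_mul, ← matC_mul]
    rw [smul_add, smul_matC_smul]
  have L : matC (Jmat (M + 1)) * Bp (M + 1) a
      = (∑ n ∈ Finset.range (M + 1), cx n • matC (A ^ n) * matC (Jmat (M + 1)))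
        + ∑ n ∈ Finset.range (M + 1), (Polynomial.C (n : ℂ) * cx n) • matC (A ^ n) := by
    rw [Bp, Finset.mul_sum, Finset.sum_congr rfl fun n _ => key n, Finset.sum_add_distrib]
  have R1 : Bp (M + 1) a * matC (Jmat (M + 1))
      = ∑ n ∈ Finset.range (M + 1), cx n • matC (A ^ n) * matC (Jmat (M + 1)) := by
    rw [Bp, Finset.sum_mul]
  have R2 : (Polynomial.X : Polynomial ℂ) • (matC A * Bp (M + 1) a)
      = ∑ n ∈ Finset.range (M + 1), (Polynomial.X * cx n) • matC (A ^ (n + 1)) := by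
    rw [Bp, Finset.mul_sum, Finset.smul_sum]
    refine Finset.sum_congr rfl fun n _ => ?_
    rw [Matrix.mul_smul, ← matC_mul, ← pow_succ', smul_smul]
  rw [L, R1, R2]
  congr 1
  rw [Finset.sum_range_succ' (fun n => (Polynomial.C (n : ℂ) * cx n) • matC (A ^ n)) M]
  rw [Finset.sum_range_succ (fun n => ((Polynomial.X : Polynomial ℂ) * cx n) • matC (A ^ (n + 1))) M]
  have top : ((Polynomial.X : Polynomial ℂ) * cx M) • matC (A ^ (M + 1)) = 0 := by
    rw [Amat_pow_eq_zero (le_refl (M + 1))]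
    ext i j; simp [matC]
  have bot : (Polynomial.C ((0:ℕ) : ℂ) * cx 0) • matC (A ^ 0) = 0 := by
    ext i j; simp [matC]
  rw [top, bot, add_zero, add_zero]
  refine Finset.sum_congr rfl fun n _ => ?_
  congr 1
  -- C (n+1) * cx (n+1) = X * cx n
  simp only [cx]
  rw [pow_succ]
  push_cast
  rw [← mul_assoc, mul_comm (Polynomial.C ((n:ℂ)+1)) (Polynomial.C (((n+1).factorial : ℂ))⁻¹), ← Polynomial.C_mul]
  push_cast
  rw [fact_inv_mul]
  ring

end DDR
namespace DDR

variable {N : ℕ} {a : ℕ → ℝ} {ν : ℝ} {δ : ℕ → ℝ}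

/-- conjugated polynomial -/
def pconj (p : Polynomial ℂ) : Polynomial ℂ := p.map (starRingEnd ℂ)

lemma pconj_mul (p q : Polynomial ℂ) : pconj (p * q) = pconj p * pconj q := by
  simp [pconj, Polynomial.map_mul]

lemma pconj_add (p q : Polynomial ℂ) : pconj (p + q) = pconj p + pconj q := by
  simp [pconj]

lemma pconj_eval (p : Polynomial ℂ) (x : ℝ) :
    (pconj p).eval (x : ℂ) = (starRingEnd ℂ) (p.eval (x : ℂ)) := by
  induction p using Polynomial.induction_on' with
  | add p q hp hq =>
      rw [pconj_add, Polynomial.eval_add, Polynomial.eval_add, map_add, hp, hq]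
  | monomial n c =>
      simp [pconj, Polynomial.eval_monomial, Complex.conj_ofReal]

lemma pconj_C (c : ℂ) : pconj (Polynomial.C c) = Polynomial.C ((starRingEnd ℂ) c) := by
  simp [pconj]

lemma pconj_X : pconj (Polynomial.X : Polynomial ℂ) = Polynomial.X := by
  simp [pconj]

lemma pconj_derivative (p : Polynomial ℂ) :
    pconj (Polynomial.derivative p) = Polynomial.derivative (pconj p) := by
  simp [pconj, Polynomial.derivative_map]

lemma Wmat_eq (x : ℝ) :
    Wmat N a ν δ x = pEval (Bp N a) x * Tmat N ν δ x * (pEval (Bp N a) x)ᴴ := by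
  rw [Wmat, exp_eq_pEval_Bp, exp_conjTranspose_eq]

/-- the polynomial datum of the `(i,j)` entry of `Q W Rᴴ`, per diagonal index `k` -/
def tpoly (a : ℕ → ℝ) (δ : ℕ → ℝ) (Q R : MatPoly N) (i j k : Fin N) : Polynomial ℂ :=
  Polynomial.C ((δ ((k : ℕ) + 1) : ℝ) : ℂ) * ((Q * Bp N a) i k) * pconj ((R * Bp N a) j k)

/-- Central Scalar Identity: entries of `Q W Rᴴ` in the `fcl` class -/
lemma entry_eq (Q R : MatPoly N) (x : ℝ) (i j : Fin N) :
    (pEval Q x * Wmat N a ν δ x * (pEval R x)ᴴ) i j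
      = ∑ k : Fin N, fcl (ν + (k : ℕ) + 1) (tpoly a δ Q R i j k) x := by
  rw [Wmat_eq]
  have h1 : pEval Q x * (pEval (Bp N a) x * Tmat N ν δ x * (pEval (Bp N a) x)ᴴ) * (pEval R x)ᴴ
      = pEval (Q * Bp N a) x * Tmat N ν δ x * (pEval (R * Bp N a) x)ᴴ := by
    rw [pEval_mul, pEval_mul, Matrix.conjTranspose_mul]
    noncomm_ring
  rw [h1]
  rw [Matrix.mul_apply]
  have h2 : ∀ k, (pEval (Q * Bp N a) x * Tmat N ν δ x) i k
      = pEval (Q * Bp N a) x i k *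
          ((Real.exp (-x) * δ ((k : ℕ) + 1) * x ^ (ν + ((k : ℕ) : ℝ) + 1) : ℝ) : ℂ) := by
    intro k
    rw [Tmat, Matrix.mul_diagonal]
  refine Finset.sum_congr rfl fun k _ => ?_
  rw [h2 k, Matrix.conjTranspose_apply]
  rw [fcl, tpoly]
  simp only [Polynomial.eval_mul, Polynomial.eval_C, pconj_eval, pEval_apply, starRingEnd_apply]
  push_cast
  ring

lemma Tmat_herm (x : ℝ) : (Tmat N ν δ x)ᴴ = Tmat N ν δ x := by
  ext i j
  rw [Matrix.conjTranspose_apply, Tmat]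
  by_cases h : i = j
  · subst h
    simp only [Matrix.diagonal_apply_eq, RCLike.star_def, Complex.conj_ofReal]
  · rw [Matrix.diagonal_apply_ne _ h, Matrix.diagonal_apply_ne' _ h, star_zero]

lemma Wmat_herm (x : ℝ) : (Wmat N a ν δ x)ᴴ = Wmat N a ν δ x := by
  rw [Wmat_eq, Matrix.conjTranspose_mul, Matrix.conjTranspose_mul, Tmat_herm,
    Matrix.conjTranspose_conjTranspose]
  noncomm_ring

/-- matrix decomposition into scalar multiples of basis matrices -/
lemma matrix_decomp (M : MatC N) :
    M = ∑ p : Fin N × Fin N, (M p.1 p.2) • Matrix.single p.1 p.2 (1 : ℂ) := by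
  classical
  rw [Fintype.sum_prod_type]
  conv_lhs => rw [Matrix.matrix_eq_sum_single M]
  refine Finset.sum_congr rfl fun i _ => Finset.sum_congr rfl fun j _ => ?_
  rw [Matrix.smul_single, smul_eq_mul, mul_one]

lemma integrableOn_of_entries (F : ℝ → MatC N) (s : Set ℝ)
    (h : ∀ i j, MeasureTheory.IntegrableOn (fun x => F x i j) s) :
    @MeasureTheory.IntegrableOn _ _ _ _ SeminormedAddGroup.toContinuousENorm F s volume := by
  classical
  have hF : (fun x => F x) = fun x => ∑ p : Fin N × Fin N,
      (F x p.1 p.2) • Matrix.single p.1 p.2 (1 : ℂ) := by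
    funext x; exact matrix_decomp (F x)
  rw [show F = fun x => F x from rfl, hF]
  apply MeasureTheory.integrable_finset_sum
  intro p _
  exact (h p.1 p.2).smul_const _

lemma integral_entry (F : ℝ → MatC N) (s : Set ℝ)
    (h : ∀ i j, MeasureTheory.IntegrableOn (fun x => F x i j) s) (i j : Fin N) :
    (∫ x in s, F x) i j = ∫ x in s, F x i j := by
  classical
  have key : (∫ x in s, F x) = ∑ p : Fin N × Fin N,
      (∫ x in s, F x p.1 p.2) • Matrix.single p.1 p.2 (1 : ℂ) := by
    calc ∫ x in s, F x
        = ∫ x in s, ∑ p : Fin N × Fin N,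
            (F x p.1 p.2) • Matrix.single p.1 p.2 (1 : ℂ) := by
          congr 1; funext x; exact matrix_decomp (F x)
      _ = ∑ p : Fin N × Fin N, ∫ x in s,
            (F x p.1 p.2) • Matrix.single p.1 p.2 (1 : ℂ) :=
          MeasureTheory.integral_finset_sum _ (fun p _ => (h p.1 p.2).smul_const _)
      _ = ∑ p : Fin N × Fin N,
            (∫ x in s, F x p.1 p.2) • Matrix.single p.1 p.2 (1 : ℂ) :=
          Finset.sum_congr rfl fun p _ => integral_smul_const _ _
  rw [key, Matrix.sum_apply]
  rw [Finset.sum_eq_single ((i, j) : Fin N × Fin N)]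
  · simp [Matrix.single]
  · intro b _ hb
    have hne : ¬(b.1 = i ∧ b.2 = j) := by
      intro hc; exact hb (Prod.ext hc.1 hc.2)
    rw [Matrix.smul_apply, Matrix.single_apply_of_ne b.1 b.2 _ _ _ hne, smul_zero]
  · intro hmem; exact absurd (Finset.mem_univ _) hmem

end DDR
namespace DDR

variable {N : ℕ} {a : ℕ → ℝ} {ν : ℝ} {δ : ℕ → ℝ}

/-- left-hand first-order operator -/
def SOp (a : ℕ → ℝ) (Q : MatPoly N) : MatPoly N :=
  (Polynomial.X : Polynomial ℂ) • pDeriv Q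
    + (Polynomial.X : Polynomial ℂ) • (Q * matC (Amat N a - 1))

/-- right-hand first-order operator -/
def TOp (ν : ℝ) (Q : MatPoly N) : MatPoly N :=
  (Polynomial.X : Polynomial ℂ) • pDeriv Q
    + Q * matC (((1 : ℂ) + (ν : ℂ)) • (1 : MatC N) + Jmat N)

lemma matC_smul_one (c : ℂ) : matC (c • (1 : MatC N)) = Polynomial.C c • (1 : MatPoly N) := by
  have := smul_matC_smul c (1 : Polynomial ℂ) (1 : MatC N)
  simpa using this

lemma SOp_mul_Bp (hN : 1 ≤ N) (Q : MatPoly N) :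
    SOp a Q * Bp N a
      = (Polynomial.X : Polynomial ℂ) • pDeriv (Q * Bp N a)
        - (Polynomial.X : Polynomial ℂ) • (Q * Bp N a) := by
  have h1 : pDeriv Q * Bp N a = pDeriv (Q * Bp N a) - Q * (matC (Amat N a) * Bp N a) := by
    rw [← pDeriv_Bp hN, pDeriv_mul]; abel
  rw [SOp, add_mul, Matrix.smul_mul, Matrix.smul_mul, h1, smul_sub]
  rw [matC_sub, matC_one, mul_sub, mul_one, sub_mul, mul_assoc, smul_sub]
  abel

lemma TOp_mul_Bp (hN : 1 ≤ N) (Q : MatPoly N) :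
    TOp ν Q * Bp N a
      = (Polynomial.X : Polynomial ℂ) • pDeriv (Q * Bp N a)
        + Polynomial.C ((1 : ℂ) + (ν : ℂ)) • (Q * Bp N a)
        + (Q * Bp N a) * matC (Jmat N) := by
  have h1 : pDeriv Q * Bp N a = pDeriv (Q * Bp N a) - Q * (matC (Amat N a) * Bp N a) := by
    rw [← pDeriv_Bp hN, pDeriv_mul]; abel
  rw [TOp, add_mul, Matrix.smul_mul, h1, smul_sub]
  rw [matC_add, matC_smul_one, mul_add, add_mul]
  rw [Matrix.mul_smul, mul_one, Matrix.smul_mul]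
  rw [mul_assoc, J_comm_Bp hN, mul_add, ← mul_assoc]
  rw [Matrix.mul_smul]
  simp only [← mul_assoc]
  abel

lemma smul_entry (q : Polynomial ℂ) (M : MatPoly N) (i j : Fin N) :
    (q • M) i j = q * M i j := rfl

lemma matC_J_diag : matC (Jmat N) = Matrix.diagonal (fun k : Fin N => Polynomial.C (((k : ℕ) : ℂ) + 1)) := by
  ext i j
  by_cases h : i = j
  · subst h; simp [matC, Jmat, Matrix.diagonal_apply_eq]
  · simp [matC, Jmat, Matrix.diagonal_apply_ne _ h]

/-- The per-entry polynomial identity encapsulating the Pearson equation. -/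
lemma PI (hN : 1 ≤ N) (Q R : MatPoly N) (i j k : Fin N) :
    tpoly a δ (SOp a Q) R i j k + tpoly a δ Q (TOp ν R) i j k
      = Polynomial.C (((ν + (k : ℕ) + 1 : ℝ) : ℂ) + 1) * tpoly a δ Q R i j k
        + Polynomial.X *
            (Polynomial.derivative (tpoly a δ Q R i j k) - tpoly a δ Q R i j k) := by
  have hS : (SOp a Q * Bp N a) i k
      = Polynomial.X * Polynomial.derivative ((Q * Bp N a) i k)
        - Polynomial.X * ((Q * Bp N a) i k) := by
    rw [SOp_mul_Bp hN, Matrix.sub_apply, smul_entry, smul_entry, pDeriv_apply]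
  have hT : (TOp ν R * Bp N a) j k
      = Polynomial.X * Polynomial.derivative ((R * Bp N a) j k)
        + Polynomial.C ((1 : ℂ) + (ν : ℂ)) * ((R * Bp N a) j k)
        + ((R * Bp N a) j k) * Polynomial.C (((k : ℕ) : ℂ) + 1) := by
    rw [TOp_mul_Bp hN, Matrix.add_apply, Matrix.add_apply, smul_entry, smul_entry, pDeriv_apply,
      matC_J_diag, Matrix.mul_diagonal]
  have hconst : Polynomial.C (((ν + (k : ℕ) + 1 : ℝ) : ℂ) + 1)
      = Polynomial.C ((1 : ℂ) + (ν : ℂ)) + Polynomial.C (((k : ℕ) : ℂ) + 1) := by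
    rw [← Polynomial.C_add]
    congr 1
    push_cast
    ring
  rw [tpoly, tpoly, tpoly, hS, hT, hconst]
  have hpc : pconj (Polynomial.X * Polynomial.derivative ((R * Bp N a) j k)
        + Polynomial.C ((1 : ℂ) + (ν : ℂ)) * ((R * Bp N a) j k)
        + ((R * Bp N a) j k) * Polynomial.C (((k : ℕ) : ℂ) + 1))
      = Polynomial.X * pconj (Polynomial.derivative ((R * Bp N a) j k))
        + Polynomial.C ((1 : ℂ) + (ν : ℂ)) * pconj ((R * Bp N a) j k)
        + pconj ((R * Bp N a) j k) * Polynomial.C (((k : ℕ) : ℂ) + 1) := by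
    rw [pconj_add, pconj_add, pconj_mul, pconj_mul, pconj_mul, pconj_X, pconj_C, pconj_C]
    have c1 : (starRingEnd ℂ) ((1 : ℂ) + (ν : ℂ)) = (1 : ℂ) + (ν : ℂ) := by
      rw [map_add, _root_.map_one, Complex.conj_ofReal]
    have c2 : (starRingEnd ℂ) (((k : ℕ) : ℂ) + 1) = ((k : ℕ) : ℂ) + 1 := by
      rw [map_add, map_natCast, _root_.map_one]
    rw [c1, c2]
  rw [hpc]
  rw [Polynomial.derivative_mul, Polynomial.derivative_mul, Polynomial.derivative_C,
    ← pconj_derivative]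
  ring

/-- matrix-valued inner product -/
def ip (a : ℕ → ℝ) (ν : ℝ) (δ : ℕ → ℝ) (Q R : MatPoly N) : MatC N :=
  ∫ x in Set.Ioi (0 : ℝ), pEval Q x * Wmat N a ν δ x * (pEval R x)ᴴ

lemma spos (hν : 0 < ν) (k : Fin N) : (0 : ℝ) < ν + (k : ℕ) + 1 := by
  have : (0 : ℝ) ≤ ((k : ℕ) : ℝ) := Nat.cast_nonneg _
  linarith

lemma entry_integrable (hν : 0 < ν) (Q R : MatPoly N) (i j : Fin N) :
    MeasureTheory.IntegrableOn
      (fun x => (pEval Q x * Wmat N a ν δ x * (pEval R x)ᴴ) i j) (Set.Ioi 0) := by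
  have : (fun x => (pEval Q x * Wmat N a ν δ x * (pEval R x)ᴴ) i j)
      = fun x => ∑ k : Fin N, fcl (ν + (k : ℕ) + 1) (tpoly a δ Q R i j k) x := by
    funext x; exact entry_eq Q R x i j
  rw [this]
  exact MeasureTheory.integrable_finset_sum _
    (fun k _ => fcl_integrableOn (spos hν k) _)

lemma mat_integrable (hν : 0 < ν) (Q R : MatPoly N) :
    @MeasureTheory.IntegrableOn _ _ _ _ SeminormedAddGroup.toContinuousENorm
      (fun x => pEval Q x * Wmat N a ν δ x * (pEval R x)ᴴ) (Set.Ioi 0) volume :=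
  integrableOn_of_entries _ _ (entry_integrable hν Q R)

lemma ip_entry (hν : 0 < ν) (Q R : MatPoly N) (i j : Fin N) :
    ip a ν δ Q R i j
      = ∑ k : Fin N, ∫ x in Set.Ioi (0 : ℝ), fcl (ν + (k : ℕ) + 1) (tpoly a δ Q R i j k) x := by
  rw [ip, integral_entry _ _ (entry_integrable hν Q R)]
  have : (fun x => (pEval Q x * Wmat N a ν δ x * (pEval R x)ᴴ) i j)
      = fun x => ∑ k : Fin N, fcl (ν + (k : ℕ) + 1) (tpoly a δ Q R i j k) x := by
    funext x; exact entry_eq Q R x i j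
  rw [this]
  exact MeasureTheory.integral_finset_sum _
    (fun k _ => fcl_integrableOn (spos hν k) _)

/-- Master identity : integration by parts against the weight -/
lemma master (hN : 1 ≤ N) (hν : 0 < ν) (Q R : MatPoly N) :
    ip a ν δ (SOp a Q) R + ip a ν δ Q (TOp ν R) = 0 := by
  ext i j
  rw [Matrix.add_apply, ip_entry hν, ip_entry hν, ← Finset.sum_add_distrib]
  rw [Matrix.zero_apply]
  rw [Finset.sum_congr rfl (fun k _ => ?_)]
  · exact Finset.sum_const_zero
  rw [← MeasureTheory.integral_add (fcl_integrableOn (spos hν k) _)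
      (fcl_integrableOn (spos hν k) _)]
  have : (fun x => fcl (ν + (k : ℕ) + 1) (tpoly a δ (SOp a Q) R i j k) x
        + fcl (ν + (k : ℕ) + 1) (tpoly a δ Q (TOp ν R) i j k) x)
      = fun x => fcl (ν + (k : ℕ) + 1)
          (Polynomial.C (((ν + (k : ℕ) + 1 : ℝ) : ℂ) + 1) * tpoly a δ Q R i j k
            + Polynomial.X * (Polynomial.derivative (tpoly a δ Q R i j k)
                - tpoly a δ Q R i j k)) x := by
    funext x
    rw [← fcl_add, PI hN Q R i j k]
  rw [this]
  exact fcl_ftc (spos hν k) _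

end DDR
namespace DDR

variable {N : ℕ} {a : ℕ → ℝ} {ν : ℝ} {δ : ℕ → ℝ}

lemma ip_conjTranspose (hν : 0 < ν) (Q R : MatPoly N) :
    (ip a ν δ Q R)ᴴ = ip a ν δ R Q := by
  ext i j
  rw [Matrix.conjTranspose_apply, ip, ip,
    integral_entry _ _ (entry_integrable hν Q R),
    integral_entry _ _ (entry_integrable hν R Q)]
  rw [← starRingEnd_apply, ← integral_conj]
  congr 1
  funext x
  rw [starRingEnd_apply, ← Matrix.conjTranspose_apply]
  congr 1
  rw [Matrix.conjTranspose_mul, Matrix.conjTranspose_mul, Matrix.conjTranspose_conjTranspose,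
    Wmat_herm, mul_assoc]

lemma ip_add_left (hν : 0 < ν) (Q Q' R : MatPoly N) :
    ip a ν δ (Q + Q') R = ip a ν δ Q R + ip a ν δ Q' R := by
  rw [ip, ip, ip, ← MeasureTheory.integral_add (mat_integrable hν Q R) (mat_integrable hν Q' R)]
  congr 1
  funext x
  rw [pEval_add, add_mul, add_mul]

lemma ip_matC_left (hν : 0 < ν) (C : MatC N) (Q R : MatPoly N) :
    ip a ν δ (matC C * Q) R = C * ip a ν δ Q R := by
  ext i j
  rw [ip, ip, integral_entry _ _ (entry_integrable hν _ R), Matrix.mul_apply]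
  have h1 : (fun x => (pEval (matC C * Q) x * Wmat N a ν δ x * (pEval R x)ᴴ) i j)
      = fun x => ∑ l, C i l * (pEval Q x * Wmat N a ν δ x * (pEval R x)ᴴ) l j := by
    funext x
    rw [pEval_mul, pEval_matC, mul_assoc, mul_assoc, ← mul_assoc (pEval Q x), Matrix.mul_apply]
  rw [h1, MeasureTheory.integral_finset_sum _
    (fun l _ => (entry_integrable hν Q R l j).const_mul (C i l))]
  refine Finset.sum_congr rfl fun l _ => ?_
  rw [MeasureTheory.integral_const_mul, integral_entry _ _ (entry_integrable hν Q R)]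

lemma ip_matC_right (hν : 0 < ν) (C : MatC N) (Q R : MatPoly N) :
    ip a ν δ Q (matC C * R) = ip a ν δ Q R * Cᴴ := by
  ext i j
  rw [ip, ip, integral_entry _ _ (entry_integrable hν Q _), Matrix.mul_apply]
  have h1 : (fun x => (pEval Q x * Wmat N a ν δ x * (pEval (matC C * R) x)ᴴ) i j)
      = fun x => ∑ l, (pEval Q x * Wmat N a ν δ x * (pEval R x)ᴴ) i l * Cᴴ l j := by
    funext x
    rw [pEval_mul, pEval_matC, Matrix.conjTranspose_mul, ← mul_assoc, Matrix.mul_apply]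
  rw [h1, MeasureTheory.integral_finset_sum _
    (fun l _ => (entry_integrable hν Q R i l).mul_const (Cᴴ l j))]
  refine Finset.sum_congr rfl fun l _ => ?_
  rw [MeasureTheory.integral_mul_const, integral_entry _ _ (entry_integrable hν Q R)]

lemma ip_sum_left (hν : 0 < ν) (s : Finset ℕ) (C : ℕ → MatC N) (Qf : ℕ → MatPoly N)
    (R : MatPoly N) :
    ip a ν δ (∑ l ∈ s, matC (C l) * Qf l) R = ∑ l ∈ s, C l * ip a ν δ (Qf l) R := by
  classical
  induction s using Finset.induction_on with
  | empty =>
      rw [Finset.sum_empty, Finset.sum_empty]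
      have h0 : (0 : MatPoly N) = matC (0 : MatC N) * 0 := by
        ext i j; simp [matC]
      rw [h0, ip_matC_left hν, Matrix.zero_mul]
  | insert _ _ h ih =>
      rw [Finset.sum_insert h, Finset.sum_insert h, ip_add_left hν, ip_matC_left hν, ih]

lemma ip_sum_right (hν : 0 < ν) (s : Finset ℕ) (C : ℕ → MatC N) (Rf : ℕ → MatPoly N)
    (Q : MatPoly N) :
    ip a ν δ Q (∑ l ∈ s, matC (C l) * Rf l) = ∑ l ∈ s, ip a ν δ Q (Rf l) * (C l)ᴴ := by
  have h1 : ip a ν δ Q (∑ l ∈ s, matC (C l) * Rf l)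
      = (ip a ν δ (∑ l ∈ s, matC (C l) * Rf l) Q)ᴴ := by
    rw [ip_conjTranspose hν]
  rw [h1, ip_sum_left hν]
  rw [Matrix.conjTranspose_sum]
  refine Finset.sum_congr rfl fun l _ => ?_
  rw [Matrix.conjTranspose_mul, ip_conjTranspose hν]

end DDR
namespace DDR

variable {N : ℕ} {a : ℕ → ℝ} {ν : ℝ} {δ : ℕ → ℝ}

lemma pCoeff_sub (Q R : MatPoly N) (k : ℕ) :
    pCoeff (Q - R) k = pCoeff Q k - pCoeff R k := by
  ext i j; simp [pCoeff]

lemma P0_eq (P : ℕ → MatPoly N) (hmonic : ∀ n, pCoeff (P n) n = 1)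
    (hdeg : ∀ n k, n < k → pCoeff (P n) k = 0) : P 0 = matC (1 : MatC N) := by
  ext i j m
  cases m with
  | zero =>
      have h := hmonic 0
      have : pCoeff (P 0) 0 i j = (1 : MatC N) i j := by rw [h]
      simpa [pCoeff, matC] using this
  | succ m =>
      have h := hdeg 0 (m + 1) (Nat.succ_pos m)
      have : pCoeff (P 0) (m + 1) i j = (0 : MatC N) i j := by rw [h]
      simp only [pCoeff, Matrix.of_apply, Matrix.zero_apply] at this
      simp [matC, this]

lemma expand (P : ℕ → MatPoly N) (hmonic : ∀ n, pCoeff (P n) n = 1)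
    (hdeg : ∀ n k, n < k → pCoeff (P n) k = 0) :
    ∀ d (Q : MatPoly N), (∀ k, d < k → pCoeff Q k = 0) →
      ∃ C : ℕ → MatC N, Q = ∑ l ∈ Finset.range (d + 1), matC (C l) * P l := by
  intro d
  induction d with
  | zero =>
      intro Q hQ
      refine ⟨fun _ => pCoeff Q 0, ?_⟩
      rw [Finset.sum_range_one, P0_eq P hmonic hdeg, ← matC_mul, mul_one]
      ext i j m
      cases m with
      | zero => simp [pCoeff, matC]
      | succ m =>
          have h := hQ (m + 1) (Nat.succ_pos m)
          have h2 : (Q i j).coeff (m + 1) = 0 := by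
            have : pCoeff Q (m + 1) i j = (0 : MatC N) i j := by rw [h]
            simpa [pCoeff] using this
          simp [matC, h2]
  | succ d ih =>
      intro Q hQ
      have hQ'deg : ∀ k, d < k → pCoeff (Q - matC (pCoeff Q (d + 1)) * P (d + 1)) k = 0 := by
        intro k hk
        rw [pCoeff_sub, pCoeff_matC_mul]
        rcases Nat.lt_or_ge k (d + 2) with h1 | h1
        · have hkd : k = d + 1 := by omega
          subst hkd
          rw [hmonic (d + 1), mul_one, sub_self]
        · rw [hQ k (by omega), hdeg (d + 1) k (by omega), mul_zero, sub_zero]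
      obtain ⟨C, hC⟩ := ih _ hQ'deg
      refine ⟨fun l => if l = d + 1 then pCoeff Q (d + 1) else C l, ?_⟩
      rw [Finset.sum_range_succ]
      simp only [if_pos rfl]
      have hcg : ∀ l ∈ Finset.range (d + 1),
          matC (if l = d + 1 then pCoeff Q (d + 1) else C l) * P l = matC (C l) * P l := by
        intro l hl
        rw [if_neg]
        intro hl2
        rw [hl2] at hl
        exact absurd (Finset.mem_range.1 hl) (lt_irrefl _)
      rw [Finset.sum_congr rfl hcg, ← hC]
      abel_nf
      simp

lemma expand_top_coeff (P : ℕ → MatPoly N) (hmonic : ∀ n, pCoeff (P n) n = 1)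
    (hdeg : ∀ n k, n < k → pCoeff (P n) k = 0) (d : ℕ) (C : ℕ → MatC N) (Q : MatPoly N)
    (hC : Q = ∑ l ∈ Finset.range (d + 1), matC (C l) * P l) :
    pCoeff Q d = C d := by
  rw [hC, pCoeff_sum, Finset.sum_range_succ]
  have hz : ∀ l ∈ Finset.range d, pCoeff (matC (C l) * P l) d = 0 := by
    intro l hl
    rw [pCoeff_matC_mul, hdeg l d (Finset.mem_range.1 hl), mul_zero]
  rw [Finset.sum_eq_zero hz, zero_add, pCoeff_matC_mul, hmonic d, mul_one]

lemma pCoeff_SOp_succ (Q : MatPoly N) (k : ℕ) :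
    pCoeff (SOp a Q) (k + 1)
      = ((k : ℂ) + 1) • pCoeff Q (k + 1) + pCoeff Q k * (Amat N a - 1) := by
  rw [SOp, pCoeff_add, pCoeff_X_smul, pCoeff_X_smul, pCoeff_pDeriv, pCoeff_mul_matC]

lemma pCoeff_TOp_succ (Q : MatPoly N) (k : ℕ) :
    pCoeff (TOp ν Q) (k + 1)
      = ((k : ℂ) + 1) • pCoeff Q (k + 1)
        + pCoeff Q (k + 1) * (((1 : ℂ) + (ν : ℂ)) • (1 : MatC N) + Jmat N) := by
  rw [TOp, pCoeff_add, pCoeff_X_smul, pCoeff_pDeriv, pCoeff_mul_matC]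

lemma pCoeff_TOp_zero (Q : MatPoly N) :
    pCoeff (TOp ν Q) 0
      = pCoeff Q 0 * (((1 : ℂ) + (ν : ℂ)) • (1 : MatC N) + Jmat N) := by
  rw [TOp, pCoeff_add, pCoeff_X_smul_zero, pCoeff_mul_matC, zero_add]

lemma SOp_deg (P : ℕ → MatPoly N) (hdeg : ∀ n k, n < k → pCoeff (P n) k = 0) (n : ℕ) :
    ∀ k, n + 1 < k → pCoeff (SOp a (P n)) k = 0 := by
  intro k hk
  obtain ⟨k', rfl⟩ : ∃ k', k = k' + 1 := ⟨k - 1, by omega⟩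
  rw [pCoeff_SOp_succ, hdeg n (k' + 1) (by omega), hdeg n k' (by omega)]
  simp

lemma TOp_deg (P : ℕ → MatPoly N) (hdeg : ∀ n k, n < k → pCoeff (P n) k = 0) (n : ℕ) :
    ∀ k, n < k → pCoeff (TOp ν (P n)) k = 0 := by
  intro k hk
  obtain ⟨k', rfl⟩ : ∃ k', k = k' + 1 := ⟨k - 1, by omega⟩
  rw [pCoeff_TOp_succ, hdeg n (k' + 1) (by omega)]
  simp

lemma SOp_top (P : ℕ → MatPoly N) (hmonic : ∀ n, pCoeff (P n) n = 1)
    (hdeg : ∀ n k, n < k → pCoeff (P n) k = 0) (n : ℕ) :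
    pCoeff (SOp a (P n)) (n + 1) = Amat N a - 1 := by
  rw [pCoeff_SOp_succ, hdeg n (n + 1) (by omega), hmonic n, smul_zero, zero_add, one_mul]

lemma TOp_top (P : ℕ → MatPoly N) (hmonic : ∀ n, pCoeff (P n) n = 1)
    (hdeg : ∀ n k, n < k → pCoeff (P n) k = 0) (n : ℕ) :
    pCoeff (TOp ν (P n)) n
      = ((n : ℂ)) • (1 : MatC N) + (((1 : ℂ) + (ν : ℂ)) • (1 : MatC N) + Jmat N) := by
  cases n with
  | zero =>
      rw [pCoeff_TOp_zero, hmonic 0, one_mul]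
      push_cast
      rw [zero_smul, zero_add]
  | succ m =>
      rw [pCoeff_TOp_succ, hmonic (m + 1), one_mul]
      push_cast
      rfl

lemma pEval_SOp (Q : MatPoly N) (x : ℝ) :
    pEval (SOp a Q) x
      = (x : ℂ) • pEval (pDeriv Q) x + (x : ℂ) • (pEval Q x * (Amat N a - 1)) := by
  rw [SOp, pEval_add, pEval_X_smul, pEval_X_smul, pEval_mul, pEval_matC]

lemma pEval_TOp (Q : MatPoly N) (x : ℝ) :
    pEval (TOp ν Q) x
      = (x : ℂ) • pEval (pDeriv Q) x
        + pEval Q x * (((1 : ℂ) + (ν : ℂ)) • (1 : MatC N) + Jmat N) := by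
  rw [TOp, pEval_add, pEval_X_smul, pEval_mul, pEval_matC]

lemma Jmat_herm : (Jmat N)ᴴ = Jmat N := by
  ext i j
  rw [Matrix.conjTranspose_apply, Jmat]
  by_cases h : i = j
  · subst h
    rw [Matrix.diagonal_apply_eq]
    rw [RCLike.star_def, map_add, map_natCast, _root_.map_one]
  · rw [Matrix.diagonal_apply_ne _ h, Matrix.diagonal_apply_ne' _ h, star_zero]

end DDR
/-- Statement 10: difference–differential relations for the monic MVOPs with respect to the
Laguerre-type weight `W^{(ν)}` (the case `φ(x) = x`). -/
theorem difference_differential_relations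
    (N : ℕ) (hN : 2 ≤ N) (a : ℕ → ℝ) (ν : ℝ) (hν : 0 < ν)
    (δ : ℕ → ℝ) (hδ : ∀ k, 1 ≤ k → k ≤ N → 0 < δ k)
    (P : ℕ → MatPoly N) (H : ℕ → MatC N)
    -- `P n` is monic of degree `n`
    (hmonic : ∀ n, pCoeff (P n) n = 1)
    (hdeg : ∀ n k, n < k → pCoeff (P n) k = 0)
    -- orthogonality, with positive definite squared norms
    (hint : ∀ n m, @IntegrableOn _ _ _ _ SeminormedAddGroup.toContinuousENorm
      (fun x : ℝ => pEval (P n) x * Wmat N a ν δ x * (pEval (P m) x)ᴴ) (Set.Ioi 0) volume)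
    (horth : ∀ n m, (∫ x in Set.Ioi (0 : ℝ),
      pEval (P n) x * Wmat N a ν δ x * (pEval (P m) x)ᴴ) = if n = m then H n else 0)
    (hpos : ∀ n, (H n).PosDef)
    :
    (∀ n : ℕ, ∀ x : ℝ, 0 < x →
      (x : ℂ) • pEval (pDeriv (P n)) x + (x : ℂ) • (pEval (P n) x * (Amat N a - 1)) =
        (Amat N a - 1) * pEval (P (n + 1)) x - (((n : ℂ) + 1 + (ν : ℂ)) • pEval (P n) x) -
          H n * Jmat N * (H n)⁻¹ * pEval (P n) x) ∧
    (∀ n : ℕ, ∀ x : ℝ, 0 < x →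
      -((x : ℂ) • pEval (pDeriv (P (n + 1))) x) -
          pEval (P (n + 1)) x * (((1 : ℂ) + (ν : ℂ)) • (1 : MatC N) + Jmat N) =
        -((((n : ℂ) + 1 + (ν : ℂ) + 1) • (1 : MatC N) + Jmat N) * pEval (P (n + 1)) x) +
          H (n + 1) * (Amat N a - 1)ᴴ * (H n)⁻¹ * pEval (P n) x) ∧
    (∀ x : ℝ, 0 < x →
      -((x : ℂ) • pEval (pDeriv (P 0)) x) -
          pEval (P 0) x * (((1 : ℂ) + (ν : ℂ)) • (1 : MatC N) + Jmat N) =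
        -((((ν : ℂ) + 1) • (1 : MatC N) + Jmat N) * pEval (P 0) x)) := by
  classical
  have hN1 : 1 ≤ N := le_trans one_le_two hN
  have hip : ∀ n m, DDR.ip a ν δ (P n) (P m) = if n = m then H n else 0 := fun n m => horth n m
  have hHinv : ∀ n, H n * (H n)⁻¹ = 1 := fun n =>
    Matrix.mul_nonsing_inv _ (isUnit_iff_ne_zero.mpr (hpos n).det_pos.ne')
  -- coefficients of an expansion are determined by inner products
  have coefEq : ∀ (d : ℕ) (Cf : ℕ → MatC N) (Q : MatPoly N),
      Q = ∑ l ∈ Finset.range (d + 1), DDR.matC (Cf l) * P l →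
      ∀ m, m < d + 1 → DDR.ip a ν δ Q (P m) = Cf m * H m := by
    intro d Cf Q hQ m hm
    rw [hQ, DDR.ip_sum_left hν]
    rw [Finset.sum_eq_single m]
    · rw [hip m m, if_pos rfl]
    · intro b _ hb
      rw [hip b m, if_neg hb, mul_zero]
    · intro hmem; exact absurd (Finset.mem_range.mpr hm) hmem
  have ipRight : ∀ (d : ℕ) (Ef : ℕ → MatC N) (G : MatPoly N),
      G = ∑ l ∈ Finset.range (d + 1), DDR.matC (Ef l) * P l →
      ∀ m, DDR.ip a ν δ (P m) G = if m < d + 1 then H m * (Ef m)ᴴ else 0 := by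
    intro d Ef G hG m
    rw [hG, DDR.ip_sum_right hν]
    by_cases hm : m < d + 1
    · rw [if_pos hm, Finset.sum_eq_single m]
      · rw [hip m m, if_pos rfl]
      · intro b _ hb
        rw [hip m b, if_neg (fun h => hb h.symm), Matrix.zero_mul]
      · intro hmem; exact absurd (Finset.mem_range.mpr hm) hmem
    · rw [if_neg hm]
      apply Finset.sum_eq_zero
      intro b hb
      have hmb : m ≠ b := by
        intro h; subst h; exact hm (Finset.mem_range.1 hb)
      rw [hip m b, if_neg hmb, Matrix.zero_mul]
  -- the Hermitian leading coefficient of TOp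
  have hKh : ∀ n : ℕ, (((n : ℂ)) • (1 : MatC N)
        + (((1 : ℂ) + (ν : ℂ)) • (1 : MatC N) + Jmat N))ᴴ
      = ((n : ℂ)) • (1 : MatC N) + (((1 : ℂ) + (ν : ℂ)) • (1 : MatC N) + Jmat N) := by
    intro n
    rw [Matrix.conjTranspose_add, Matrix.conjTranspose_add, Matrix.conjTranspose_smul,
      Matrix.conjTranspose_smul, Matrix.conjTranspose_one, DDR.Jmat_herm]
    congr 2
    · simp
    · rw [RCLike.star_def, map_add, _root_.map_one, Complex.conj_ofReal]
  refine ⟨?_, ?_, ?_⟩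
  · -- relation 1
    intro n x hx
    obtain ⟨Cf, hD⟩ := DDR.expand P hmonic hdeg (n + 1) (DDR.SOp a (P n))
      (DDR.SOp_deg P hdeg n)
    have hCtop : Cf (n + 1) = Amat N a - 1 := by
      rw [← DDR.expand_top_coeff P hmonic hdeg (n + 1) Cf _ hD,
        DDR.SOp_top P hmonic hdeg n]
    have hCj : ∀ j, j < n + 1 →
        Cf j * H j = -(DDR.ip a ν δ (P n) (DDR.TOp ν (P j))) := by
      intro j hj
      rw [← coefEq (n + 1) Cf _ hD j (by omega)]
      exact eq_neg_of_add_eq_zero_left (DDR.master hN1 hν (P n) (P j))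
    have hCzero : ∀ j, j < n → Cf j = 0 := by
      intro j hj
      obtain ⟨Ef, hE⟩ := DDR.expand P hmonic hdeg j (DDR.TOp ν (P j))
        (DDR.TOp_deg P hdeg j)
      have h0 : DDR.ip a ν δ (P n) (DDR.TOp ν (P j)) = 0 := by
        rw [ipRight j Ef _ hE n, if_neg (by omega)]
      have h1 : Cf j * H j = 0 := by rw [hCj j (by omega), h0, neg_zero]
      have h2 : Cf j = Cf j * H j * (H j)⁻¹ := by rw [mul_assoc, hHinv j, mul_one]
      rw [h2, h1, Matrix.zero_mul]
    have hCn : Cf n = -(H n * (((n : ℂ)) • (1 : MatC N)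
        + (((1 : ℂ) + (ν : ℂ)) • (1 : MatC N) + Jmat N)) * (H n)⁻¹) := by
      obtain ⟨Ef, hE⟩ := DDR.expand P hmonic hdeg n (DDR.TOp ν (P n))
        (DDR.TOp_deg P hdeg n)
      have hEtop : Ef n = ((n : ℂ)) • (1 : MatC N)
          + (((1 : ℂ) + (ν : ℂ)) • (1 : MatC N) + Jmat N) := by
        rw [← DDR.expand_top_coeff P hmonic hdeg n Ef _ hE,
          DDR.TOp_top P hmonic hdeg n]
      have h1 : DDR.ip a ν δ (P n) (DDR.TOp ν (P n))
          = H n * (((n : ℂ)) • (1 : MatC N)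
              + (((1 : ℂ) + (ν : ℂ)) • (1 : MatC N) + Jmat N)) := by
        rw [ipRight n Ef _ hE n, if_pos (by omega), hEtop, hKh n]
      have h2 : Cf n * H n = -(H n * (((n : ℂ)) • (1 : MatC N)
          + (((1 : ℂ) + (ν : ℂ)) • (1 : MatC N) + Jmat N))) := by
        rw [hCj n (by omega), h1]
      have h3 : Cf n = Cf n * H n * (H n)⁻¹ := by rw [mul_assoc, hHinv n, mul_one]
      rw [h3, h2, Matrix.neg_mul]
    -- evaluate the expansion at x
    have hEval := congrArg (fun M => pEval M x) hD
    rw [DDR.pEval_SOp, DDR.pEval_sum, Finset.sum_range_succ, Finset.sum_range_succ] at hEval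
    have hzs : (∑ l ∈ Finset.range n, pEval (DDR.matC (Cf l) * P l) x) = 0 := by
      apply Finset.sum_eq_zero
      intro l hl
      rw [DDR.pEval_mul, DDR.pEval_matC, hCzero l (Finset.mem_range.1 hl), Matrix.zero_mul]
    rw [hzs, zero_add, DDR.pEval_mul, DDR.pEval_matC, DDR.pEval_mul, DDR.pEval_matC,
      hCtop, hCn] at hEval
    rw [hEval]
    have hsplit : H n * (((n : ℂ)) • (1 : MatC N)
          + (((1 : ℂ) + (ν : ℂ)) • (1 : MatC N) + Jmat N)) * (H n)⁻¹
        = ((n : ℂ) + 1 + (ν : ℂ)) • (1 : MatC N) + H n * Jmat N * (H n)⁻¹ := by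
      rw [mul_add, mul_add, Matrix.mul_smul, Matrix.mul_smul, mul_one]
      rw [add_mul, add_mul, Matrix.smul_mul, Matrix.smul_mul, hHinv n]
      rw [← add_assoc, ← add_smul]
      congr 2
      ring
    rw [hsplit]
    rw [Matrix.neg_mul, Matrix.add_mul, Matrix.smul_mul, one_mul]
    abel
  · -- relation 2
    intro n x hx
    obtain ⟨Cf, hG⟩ := DDR.expand P hmonic hdeg (n + 1) (DDR.TOp ν (P (n + 1)))
      (DDR.TOp_deg P hdeg (n + 1))
    have hCtop : Cf (n + 1) = ((n : ℂ) + 1 + (ν : ℂ) + 1) • (1 : MatC N) + Jmat N := by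
      rw [← DDR.expand_top_coeff P hmonic hdeg (n + 1) Cf _ hG,
        DDR.TOp_top P hmonic hdeg (n + 1)]
      rw [← add_assoc, ← add_smul]
      push_cast
      congr 2
      ring
    have hCj : ∀ j, j < n + 1 →
        Cf j * H j = -(DDR.ip a ν δ (P (n + 1)) (DDR.SOp a (P j))) := by
      intro j hj
      rw [← coefEq (n + 1) Cf _ hG j (by omega)]
      have hm := DDR.master (a := a) (δ := δ) hN1 hν (P j) (P (n + 1))
      have h1 : DDR.ip a ν δ (P j) (DDR.TOp ν (P (n + 1)))
          = -(DDR.ip a ν δ (DDR.SOp a (P j)) (P (n + 1))) :=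
        eq_neg_of_add_eq_zero_right hm
      have h2 : DDR.ip a ν δ (DDR.TOp ν (P (n + 1))) (P j)
          = (DDR.ip a ν δ (P j) (DDR.TOp ν (P (n + 1))))ᴴ := by
        rw [DDR.ip_conjTranspose hν]
      rw [h2, h1, Matrix.conjTranspose_neg, DDR.ip_conjTranspose hν]
    have hCzero : ∀ j, j < n → Cf j = 0 := by
      intro j hj
      obtain ⟨Ef, hE⟩ := DDR.expand P hmonic hdeg (j + 1) (DDR.SOp a (P j))
        (DDR.SOp_deg P hdeg j)
      have h0 : DDR.ip a ν δ (P (n + 1)) (DDR.SOp a (P j)) = 0 := by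
        rw [ipRight (j + 1) Ef _ hE (n + 1), if_neg (by omega)]
      have h1 : Cf j * H j = 0 := by rw [hCj j (by omega), h0, neg_zero]
      have h2 : Cf j = Cf j * H j * (H j)⁻¹ := by rw [mul_assoc, hHinv j, mul_one]
      rw [h2, h1, Matrix.zero_mul]
    have hCn : Cf n = -(H (n + 1) * (Amat N a - 1)ᴴ * (H n)⁻¹) := by
      obtain ⟨Ef, hE⟩ := DDR.expand P hmonic hdeg (n + 1) (DDR.SOp a (P n))
        (DDR.SOp_deg P hdeg n)
      have hEtop : Ef (n + 1) = Amat N a - 1 := by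
        rw [← DDR.expand_top_coeff P hmonic hdeg (n + 1) Ef _ hE,
          DDR.SOp_top P hmonic hdeg n]
      have h1 : DDR.ip a ν δ (P (n + 1)) (DDR.SOp a (P n))
          = H (n + 1) * (Amat N a - 1)ᴴ := by
        rw [ipRight (n + 1) Ef _ hE (n + 1), if_pos (by omega), hEtop]
      have h2 : Cf n * H n = -(H (n + 1) * (Amat N a - 1)ᴴ) := by
        rw [hCj n (by omega), h1]
      have h3 : Cf n = Cf n * H n * (H n)⁻¹ := by rw [mul_assoc, hHinv n, mul_one]
      rw [h3, h2, Matrix.neg_mul]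
    have hEval := congrArg (fun M => pEval M x) hG
    rw [DDR.pEval_TOp, DDR.pEval_sum, Finset.sum_range_succ, Finset.sum_range_succ] at hEval
    have hzs : (∑ l ∈ Finset.range n, pEval (DDR.matC (Cf l) * P l) x) = 0 := by
      apply Finset.sum_eq_zero
      intro l hl
      rw [DDR.pEval_mul, DDR.pEval_matC, hCzero l (Finset.mem_range.1 hl), Matrix.zero_mul]
    rw [hzs, zero_add, DDR.pEval_mul, DDR.pEval_matC, DDR.pEval_mul, DDR.pEval_matC,
      hCtop, hCn] at hEval
    have hgoal : -((x : ℂ) • pEval (pDeriv (P (n + 1))) x)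
        - pEval (P (n + 1)) x * (((1 : ℂ) + (ν : ℂ)) • (1 : MatC N) + Jmat N)
        = -((x : ℂ) • pEval (pDeriv (P (n + 1))) x
            + pEval (P (n + 1)) x * (((1 : ℂ) + (ν : ℂ)) • (1 : MatC N) + Jmat N)) := by
      abel
    rw [hgoal, hEval]
    rw [Matrix.neg_mul, neg_add, neg_neg]
    abel
  · -- relation 3
    intro x hx
    have hP0 : P 0 = DDR.matC (1 : MatC N) := DDR.P0_eq P hmonic hdeg
    rw [hP0, DDR.pDeriv_matC, DDR.pEval_zero, DDR.pEval_matC]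
    rw [smul_zero, neg_zero, zero_sub, one_mul, mul_one]
    have : ((1 : ℂ) + (ν : ℂ)) • (1 : MatC N) = ((ν : ℂ) + 1) • (1 : MatC N) := by
      rw [add_comm]
    rw [this]
end
end

section
/- In the Lie algebra of right-acting operators on smooth matrix-valued functions, with φ(x) = x, the following bracket identities hold: [𝒟, m] = −m; [𝒟†, m] = m; [𝒟, 𝒟†] = m; [D, m] = −𝒟 + 𝒟†; [𝒟, D] = −𝒟 + D − (1+ν)·1; and [𝒟†, D] = 𝒟† − D + (1+ν)·1. -/
open Matrix
open scoped ContDiff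

attribute [local instance] Matrix.normedAddCommGroup Matrix.normedSpace

noncomputable section

/-- the right-acting operator `𝒟`, `(Q·𝒟)(x) = x Q'(x) + x Q(x)(A−1)` -/
def OpD (N : ℕ) (a : ℕ → ℝ) : (ℝ → MatC N) → ℝ → MatC N := fun Q x =>
  (x : ℂ) • deriv Q x + (x : ℂ) • (Q x * (Amat N a - 1))

/-- the right-acting operator `𝒟†`, `(Q·𝒟†)(x) = −x Q'(x) − Q(x)(1+ν+J)` (the case `φ(x)=x`) -/
def OpDdag (N : ℕ) (ν : ℝ) : (ℝ → MatC N) → ℝ → MatC N := fun Q x =>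
  -((x : ℂ) • deriv Q x) - Q x * (((1 : ℂ) + (ν : ℂ)) • (1 : MatC N) + Jmat N)

/-- the right-acting multiplication operator `m`, `(Q·m)(x) = x Q(x)` -/
def OpM (N : ℕ) : (ℝ → MatC N) → ℝ → MatC N := fun Q x => (x : ℂ) • Q x

/-- the right-acting second-order operator `D`,
`(Q·D)(x) = x Q''(x) + Q'(x)((A−1)x + 1+ν+J) + Q(x)(Aν + JA − J)` -/
def OpD2 (N : ℕ) (a : ℕ → ℝ) (ν : ℝ) : (ℝ → MatC N) → ℝ → MatC N := fun Q x =>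
  (x : ℂ) • deriv (deriv Q) x +
    deriv Q x * ((x : ℂ) • (Amat N a - 1) + ((1 : ℂ) + (ν : ℂ)) • (1 : MatC N) + Jmat N) +
    Q x * ((ν : ℂ) • Amat N a + Jmat N * Amat N a - Jmat N)

/-- the Lie bracket of right-acting operators: since `Q·(𝒮𝒯) = (Q·𝒮)·𝒯`, the product `𝒮𝒯`
acts as `T ∘ S`, and `[𝒮,𝒯] = 𝒮𝒯 − 𝒯𝒮` acts as `Q ↦ T (S Q) − S (T Q)`. -/
def rbrk {N : ℕ} (S T : (ℝ → MatC N) → ℝ → MatC N) : (ℝ → MatC N) → ℝ → MatC N :=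
  fun Q => T (S Q) - S (T Q)

/-! ### Auxiliary lemmas -/

lemma hdA_ofReal' (x : ℝ) : HasDerivAt (fun y : ℝ => (y : ℂ)) 1 x := by
  exact Complex.ofRealCLM.hasDerivAt (x := x)

lemma HasDerivAt.xsmul' {N : ℕ} {f : ℝ → MatC N} {f' : MatC N} {x : ℝ}
    (hf : HasDerivAt f f' x) :
    HasDerivAt (fun y : ℝ => (y : ℂ) • f y) ((x : ℂ) • f' + f x) x := by
  have h := (hdA_ofReal' x).smul hf
  rw [one_smul] at h
  exact h

lemma HasDerivAt.mulconst' {N : ℕ} {f : ℝ → MatC N} {f' : MatC N} {x : ℝ}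
    (hf : HasDerivAt f f' x) (M : MatC N) :
    HasDerivAt (fun y => f y * M) (f' * M) x := by
  have h := (LinearMap.toContinuousLinearMap
    ((LinearMap.mulRight ℂ M).restrictScalars ℝ)).hasFDerivAt.comp_hasDerivAt x hf
  exact h

lemma AJ_comm' (N : ℕ) (a : ℕ → ℝ) :
    Amat N a * Jmat N = Jmat N * Amat N a - Amat N a := by
  ext i j
  simp only [Jmat, Amat, Matrix.mul_diagonal, Matrix.diagonal_mul, Matrix.sub_apply,
    Matrix.of_apply]
  split_ifs with h
  · rw [h]; push_cast; ring
  · ring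

lemma AJ_comm2' (N : ℕ) (a : ℕ → ℝ) (X : MatC N) :
    Amat N a * (Jmat N * X) = Jmat N * (Amat N a * X) - Amat N a * X := by
  rw [← mul_assoc, AJ_comm', sub_mul, mul_assoc]

/-- Statement 14: with `φ(x) = x`, the bracket identities `[𝒟,m] = −m`, `[𝒟†,m] = m`,
`[𝒟,𝒟†] = m`, `[D,m] = −𝒟 + 𝒟†`, `[𝒟,D] = −𝒟 + D − (1+ν)·1`,
`[𝒟†,D] = 𝒟† − D + (1+ν)·1` hold. -/
theorem bracket_identities_phi_x
    (N : ℕ) (hN : 2 ≤ N) (a : ℕ → ℝ) (ν : ℝ) (hν : 0 < ν) :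
    ∀ Q : ℝ → MatC N, ContDiff ℝ ∞ Q → ∀ x : ℝ, 0 < x →
      (rbrk (OpD N a) (OpM N) Q x = -(OpM N Q x)) ∧
      (rbrk (OpDdag N ν) (OpM N) Q x = OpM N Q x) ∧
      (rbrk (OpD N a) (OpDdag N ν) Q x = OpM N Q x) ∧
      (rbrk (OpD2 N a ν) (OpM N) Q x = -(OpD N a Q x) + OpDdag N ν Q x) ∧
      (rbrk (OpD N a) (OpD2 N a ν) Q x =
        -(OpD N a Q x) + OpD2 N a ν Q x - ((1 : ℂ) + (ν : ℂ)) • Q x) ∧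
      (rbrk (OpDdag N ν) (OpD2 N a ν) Q x =
        OpDdag N ν Q x - OpD2 N a ν Q x + ((1 : ℂ) + (ν : ℂ)) • Q x) := by
  intro Q hQ x hx
  -- notation for the constant matrices
  set A' : MatC N := Amat N a - 1 with hA'def
  set B : MatC N := ((1 : ℂ) + (ν : ℂ)) • (1 : MatC N) + Jmat N with hBdef
  set C : MatC N := (ν : ℂ) • Amat N a + Jmat N * Amat N a - Jmat N with hCdef
  -- differentiability of Q and its derivatives
  have hQ1c : ContDiff ℝ ∞ (deriv Q) := (contDiff_infty_iff_deriv.mp hQ).2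
  have hQ2c : ContDiff ℝ ∞ (deriv (deriv Q)) := (contDiff_infty_iff_deriv.mp hQ1c).2
  have d0 : ∀ t : ℝ, HasDerivAt Q (deriv Q t) t :=
    fun t => ((contDiff_infty_iff_deriv.mp hQ).1 t).hasDerivAt
  have d1 : ∀ t : ℝ, HasDerivAt (deriv Q) (deriv (deriv Q) t) t :=
    fun t => ((contDiff_infty_iff_deriv.mp hQ1c).1 t).hasDerivAt
  have d2 : ∀ t : ℝ, HasDerivAt (deriv (deriv Q)) (deriv (deriv (deriv Q)) t) t :=
    fun t => ((contDiff_infty_iff_deriv.mp hQ2c).1 t).hasDerivAt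
  -- pointwise unfolding of the operators
  have vM : ∀ f : ℝ → MatC N, ∀ t : ℝ, OpM N f t = (t : ℂ) • f t := fun f t => rfl
  have vD : ∀ f : ℝ → MatC N, ∀ t : ℝ,
      OpD N a f t = (t : ℂ) • deriv f t + (t : ℂ) • (f t * A') := fun f t => rfl
  have vDdag : ∀ f : ℝ → MatC N, ∀ t : ℝ,
      OpDdag N ν f t = -((t : ℂ) • deriv f t) - f t * B := fun f t => rfl
  have vD2 : ∀ f : ℝ → MatC N, ∀ t : ℝ,
      OpD2 N a ν f t = (t : ℂ) • deriv (deriv f) t +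
        deriv f t * ((t : ℂ) • A' + B) + f t * C := by
    intro f t
    simp only [OpD2, ← hA'def, ← hBdef, ← hCdef, add_assoc]
  -- derivatives of `OpM Q`
  have hMhas : ∀ t : ℝ, HasDerivAt (OpM N Q) ((t : ℂ) • deriv Q t + Q t) t :=
    fun t => (d0 t).xsmul'
  have hM1 : ∀ t : ℝ, deriv (OpM N Q) t = (t : ℂ) • deriv Q t + Q t :=
    fun t => (hMhas t).deriv
  have hMfun : deriv (OpM N Q) = fun t : ℝ => (t : ℂ) • deriv Q t + Q t := funext hM1
  have hM2 : ∀ t : ℝ, deriv (deriv (OpM N Q)) t =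
      ((t : ℂ) • deriv (deriv Q) t + deriv Q t) + deriv Q t := by
    intro t
    rw [hMfun]
    exact (((d1 t).xsmul').add (d0 t)).deriv
  -- derivatives of `OpD Q`
  have hDhas : ∀ t : ℝ, HasDerivAt (OpD N a Q)
      (((t : ℂ) • deriv (deriv Q) t + deriv Q t) +
        ((t : ℂ) • (deriv Q t * A') + Q t * A')) t :=
    fun t => ((d1 t).xsmul').add (((d0 t).mulconst' A').xsmul')
  have hD1 : ∀ t : ℝ, deriv (OpD N a Q) t =
      ((t : ℂ) • deriv (deriv Q) t + deriv Q t) +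
        ((t : ℂ) • (deriv Q t * A') + Q t * A') := fun t => (hDhas t).deriv
  have hDfun : deriv (OpD N a Q) = fun t : ℝ =>
      ((t : ℂ) • deriv (deriv Q) t + deriv Q t) +
        ((t : ℂ) • (deriv Q t * A') + Q t * A') := funext hD1
  have hD2deriv : ∀ t : ℝ, deriv (deriv (OpD N a Q)) t =
      (((t : ℂ) • deriv (deriv (deriv Q)) t + deriv (deriv Q) t) + deriv (deriv Q) t) +
        (((t : ℂ) • (deriv (deriv Q) t * A') + deriv Q t * A') + deriv Q t * A') := by
    intro t
    rw [hDfun]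
    exact ((((d2 t).xsmul').add (d1 t)).add
      ((((d1 t).mulconst' A').xsmul').add ((d0 t).mulconst' A'))).deriv
  -- derivatives of `OpDdag Q`
  have hGhas : ∀ t : ℝ, HasDerivAt (OpDdag N ν Q)
      (-((t : ℂ) • deriv (deriv Q) t + deriv Q t) - deriv Q t * B) t :=
    fun t => (((d1 t).xsmul').neg).sub ((d0 t).mulconst' B)
  have hG1 : ∀ t : ℝ, deriv (OpDdag N ν Q) t =
      -((t : ℂ) • deriv (deriv Q) t + deriv Q t) - deriv Q t * B :=
    fun t => (hGhas t).deriv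
  have hGfun : deriv (OpDdag N ν Q) = fun t : ℝ =>
      -((t : ℂ) • deriv (deriv Q) t + deriv Q t) - deriv Q t * B := funext hG1
  have hG2 : ∀ t : ℝ, deriv (deriv (OpDdag N ν Q)) t =
      -(((t : ℂ) • deriv (deriv (deriv Q)) t + deriv (deriv Q) t) + deriv (deriv Q) t) -
        deriv (deriv Q) t * B := by
    intro t
    rw [hGfun]
    exact (((((d2 t).xsmul').add (d1 t))).neg).sub ((d1 t).mulconst' B) |>.deriv
  -- derivative of `OpD2 Q`
  have hD2fun : OpD2 N a ν Q = fun y : ℝ =>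
      ((y : ℂ) • deriv (deriv Q) y +
        ((y : ℂ) • (deriv Q y * A') + deriv Q y * B)) + Q y * C := by
    funext y
    simp only [OpD2, ← hA'def, ← hBdef, ← hCdef, mul_add, mul_smul_comm, add_assoc]
  have hHhas : ∀ t : ℝ, HasDerivAt (OpD2 N a ν Q)
      ((((t : ℂ) • deriv (deriv (deriv Q)) t + deriv (deriv Q) t) +
        (((t : ℂ) • (deriv (deriv Q) t * A') + deriv Q t * A') + deriv (deriv Q) t * B)) +
        deriv Q t * C) t := by
    intro t
    rw [hD2fun]
    exact (((d2 t).xsmul').add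
      ((((d1 t).mulconst' A').xsmul').add ((d1 t).mulconst' B))).add ((d0 t).mulconst' C)
  have hH1 : ∀ t : ℝ, deriv (OpD2 N a ν Q) t =
      (((t : ℂ) • deriv (deriv (deriv Q)) t + deriv (deriv Q) t) +
        (((t : ℂ) • (deriv (deriv Q) t * A') + deriv Q t * A') + deriv (deriv Q) t * B)) +
        deriv Q t * C := fun t => (hHhas t).deriv
  -- the six identities
  have hJA := AJ_comm' N a
  have hJA2 := AJ_comm2' N a
  refine ⟨?_, ?_, ?_, ?_, ?_, ?_⟩ <;>
  · simp only [rbrk, Pi.sub_apply, vM, vD, vDdag, vD2, hM1, hM2, hD1, hD2deriv, hG1, hG2, hH1,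
      hA'def, hBdef, hCdef]
    simp only [mul_add, add_mul, mul_sub, sub_mul, smul_mul_assoc, mul_smul_comm, mul_one,
      one_mul, smul_add, smul_sub, smul_smul, neg_mul, mul_neg, neg_smul, smul_neg, neg_neg,
      neg_add, mul_assoc, hJA2, hJA]
    match_scalars <;> ring
end
end

section
/- The zeroth moment H_0 = ∫₀^∞ e^{xA} T^{(ν)}(x) e^{xA^T} dx of the Laguerre-type weight satisfies, for all 1 ≤ i, j ≤ N, (H_0)_{i,j} = Σ_{r=1}^{min(i,j)} [δ^{(ν)}_r / ((i−r)! (j−r)!)] · (∏_{k=r}^{i−1} a_k) · (∏_{s=r}^{j−1} a_s) · Γ(ν + i + j − r + 1), where Γ is the Gamma function and empty products equal 1. -/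
open MeasureTheory Matrix

attribute [local instance] Matrix.normedAddCommGroup Matrix.normedSpace

noncomputable section

lemma Amat_pow_apply (N : ℕ) (a : ℕ → ℝ) (n : ℕ) (i j : Fin N) :
    (Amat N a ^ n) i j =
      if (i : ℕ) = (j : ℕ) + n then
        ((∏ k ∈ Finset.Ico ((j : ℕ) + 1) ((i : ℕ) + 1), a k : ℝ) : ℂ) else 0 := by
  induction n generalizing i j with
  | zero =>
    simp only [pow_zero, Matrix.one_apply, add_zero, Nat.pow_zero]
    rcases eq_or_ne i j with rfl | h
    · simp
    · have : (i : ℕ) ≠ (j : ℕ) := fun hc => h (Fin.ext hc)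
      simp [h, this]
  | succ n ih =>
    rw [pow_succ', Matrix.mul_apply]
    by_cases hi : 1 ≤ (i : ℕ)
    · have hiN : (i : ℕ) - 1 < N := lt_of_le_of_lt (Nat.sub_le _ _) i.isLt
      set i' : Fin N := ⟨(i : ℕ) - 1, hiN⟩ with hi'
      have hsum : ∑ l, Amat N a i l * (Amat N a ^ n) l j
          = Amat N a i i' * (Amat N a ^ n) i' j := by
        refine Finset.sum_eq_single i' (fun l _ hl => ?_) (by simp)
        have : (i : ℕ) ≠ (l : ℕ) + 1 := by
          intro hc
          apply hl; apply Fin.ext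
          simp [hi', hc]
        simp only [Amat, Matrix.of_apply, if_neg this, zero_mul]
      rw [hsum, ih]
      have hii' : (i : ℕ) = (i' : ℕ) + 1 := by simp [hi']; omega
      simp only [Amat, Matrix.of_apply]
      rw [if_pos hii']
      by_cases hcond : (i : ℕ) = (j : ℕ) + (n + 1)
      · have h1 : (i' : ℕ) = (j : ℕ) + n := by simp [hi']; omega
        rw [if_pos h1, if_pos hcond]
        rw [← Complex.ofReal_mul]
        congr 1
        have h2 : (j : ℕ) + 1 ≤ (i' : ℕ) + 1 := by omega
        rw [mul_comm, hii']
        exact (Finset.prod_Ico_succ_top h2 a).symm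
      · have h1 : (i' : ℕ) ≠ (j : ℕ) + n := by omega
        rw [if_neg h1, if_neg hcond, mul_zero]
    · have hi0 : (i : ℕ) = 0 := by omega
      have : ∀ l : Fin N, Amat N a i l * (Amat N a ^ n) l j = 0 := by
        intro l
        have : (i : ℕ) ≠ (l : ℕ) + 1 := by omega
        simp only [Amat, Matrix.of_apply, if_neg this, zero_mul]
      rw [Finset.sum_congr rfl (fun l _ => this l), Finset.sum_const, smul_zero]
      rw [if_neg (by omega)]

lemma Amat_pow_N (N : ℕ) (a : ℕ → ℝ) : Amat N a ^ N = 0 := by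
  ext i j
  rw [Amat_pow_apply, if_neg (by have := i.isLt; omega)]
  simp

lemma expA_apply (N : ℕ) (a : ℕ → ℝ) (z : ℂ) (i j : Fin N) :
    (NormedSpace.exp (z • Amat N a)) i j =
      if (j : ℕ) ≤ (i : ℕ) then
        z ^ ((i : ℕ) - (j : ℕ)) * ((((i : ℕ) - (j : ℕ)).factorial : ℂ))⁻¹ *
          ((∏ k ∈ Finset.Ico ((j : ℕ) + 1) ((i : ℕ) + 1), a k : ℝ) : ℂ)
      else 0 := by
  rw [NormedSpace.exp_eq_tsum (𝕂 := ℂ)]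
  beta_reduce
  have hvan : ∀ n ∉ Finset.range N, ((n.factorial : ℂ))⁻¹ • (z • Amat N a) ^ n = (0 : MatC N) := by
    intro n hn
    rw [Finset.mem_range, not_lt] at hn
    rw [smul_pow, pow_eq_zero_of_le hn (Amat_pow_N N a), smul_zero, smul_zero]
  rw [tsum_eq_sum hvan]
  rw [Matrix.sum_apply]
  have hterm : ∀ n, (((n.factorial : ℂ))⁻¹ • (z • Amat N a) ^ n) i j
      = ((n.factorial : ℂ))⁻¹ * z ^ n * ((Amat N a ^ n) i j) := by
    intro n
    rw [smul_pow, Matrix.smul_apply, Matrix.smul_apply, smul_eq_mul, smul_eq_mul]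
    ring
  have hsum : ∑ n ∈ Finset.range N, (((n.factorial : ℂ))⁻¹ • (z • Amat N a) ^ n) i j
      = (((((i : ℕ) - (j : ℕ)).factorial : ℂ))⁻¹ • (z • Amat N a) ^ ((i : ℕ) - (j : ℕ))) i j := by
    refine Finset.sum_eq_single _ (fun n _ hn => ?_) (fun h => absurd (Finset.mem_range.2 (by have := i.isLt; omega)) h)
    rw [hterm, Amat_pow_apply, if_neg (by omega), mul_zero]
  rw [hsum, hterm, Amat_pow_apply]
  by_cases hij : (j : ℕ) ≤ (i : ℕ)
  · rw [if_pos (by omega), if_pos hij]; ring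
  · rw [if_neg (by omega), if_neg hij, mul_zero]

lemma expAT_apply (N : ℕ) (a : ℕ → ℝ) (z : ℂ) (i j : Fin N) :
    (NormedSpace.exp (z • (Amat N a)ᵀ)) i j =
      if (i : ℕ) ≤ (j : ℕ) then
        z ^ ((j : ℕ) - (i : ℕ)) * ((((j : ℕ) - (i : ℕ)).factorial : ℂ))⁻¹ *
          ((∏ k ∈ Finset.Ico ((i : ℕ) + 1) ((j : ℕ) + 1), a k : ℝ) : ℂ)
      else 0 := by
  have h : z • (Amat N a)ᵀ = (z • Amat N a)ᵀ := by rw [Matrix.transpose_smul]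
  rw [h, Matrix.exp_transpose, Matrix.transpose_apply, expA_apply]

/-- Statement 19: the zeroth moment `H₀ = ∫₀^∞ e^{xA} T^{(ν)}(x) e^{xAᵀ} dx` satisfies
`(H₀)_{i,j} = Σ_{r=1}^{min(i,j)} δ_r/((i−r)!(j−r)!) (∏_{k=r}^{i−1} a_k)(∏_{s=r}^{j−1} a_s)
Γ(ν+i+j−r+1)` (rows and columns labelled `1,…,N`; the index pair `(i,j) : Fin N × Fin N`
corresponds to the labels `(i+1, j+1)`, and the summation index `r` below corresponds to the
label `r+1`). -/
theorem H0_entries_formula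
    (N : ℕ) (hN : 2 ≤ N) (a : ℕ → ℝ) (ν : ℝ) (hν : 0 < ν)
    (δ : ℕ → ℝ) (hδ : ∀ k, 1 ≤ k → k ≤ N → 0 < δ k)
    (hint : @IntegrableOn _ _ _ _ SeminormedAddGroup.toContinuousENorm
      (fun x : ℝ => NormedSpace.exp ((x : ℂ) • Amat N a) * Tmat N ν δ x *
        NormedSpace.exp ((x : ℂ) • (Amat N a)ᵀ)) (Set.Ioi 0) volume) :
    ∀ i j : Fin N,
      (∫ x in Set.Ioi (0 : ℝ), NormedSpace.exp ((x : ℂ) • Amat N a) * Tmat N ν δ x *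
        NormedSpace.exp ((x : ℂ) • (Amat N a)ᵀ)) i j =
      ∑ r ∈ Finset.range (min ((i : ℕ) + 1) ((j : ℕ) + 1)),
        ((δ (r + 1) / ((Nat.factorial ((i : ℕ) - r)) * (Nat.factorial ((j : ℕ) - r))) *
          (∏ k ∈ Finset.Ico (r + 1) ((i : ℕ) + 1), a k) *
          (∏ s ∈ Finset.Ico (r + 1) ((j : ℕ) + 1), a s) *
          Real.Gamma (ν + ((i : ℕ) + 1) + ((j : ℕ) + 1) - (r + 1) + 1) : ℝ) : ℂ) := by
  intro i j
  set I : ℕ := (i : ℕ) with hI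
  set J : ℕ := (j : ℕ) with hJ
  set m : ℕ := min (I + 1) (J + 1) with hm
  -- coefficient and exponent
  set c : ℕ → ℝ := fun r => δ (r + 1) /
      ((Nat.factorial (I - r) : ℝ) * (Nat.factorial (J - r) : ℝ)) *
      (∏ k ∈ Finset.Ico (r + 1) (I + 1), a k) *
      (∏ s ∈ Finset.Ico (r + 1) (J + 1), a s) with hc
  set sr : ℕ → ℝ := fun r => ν + (I : ℝ) + (J : ℝ) - (r : ℝ) + 2 with hsr
  set g : ℕ → ℝ → ℂ := fun r x =>
      if r + 1 ≤ m then ((c r * (Real.exp (-x) * x ^ (sr r - 1)) : ℝ) : ℂ) else 0 with hg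
  -- Step 1: entry of integral
  have h1 : (∫ x in Set.Ioi (0 : ℝ), NormedSpace.exp ((x : ℂ) • Amat N a) * Tmat N ν δ x *
        NormedSpace.exp ((x : ℂ) • (Amat N a)ᵀ)) i j
      = ∫ x in Set.Ioi (0 : ℝ), (NormedSpace.exp ((x : ℂ) • Amat N a) * Tmat N ν δ x *
        NormedSpace.exp ((x : ℂ) • (Amat N a)ᵀ)) i j := by
    let L1 : MatC N →L[ℝ] (Fin N → ℂ) := ContinuousLinearMap.proj i
    let L : MatC N →L[ℝ] ℂ := (ContinuousLinearMap.proj j).comp L1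
    exact (ContinuousLinearMap.integral_comp_comm L hint).symm
  rw [h1]
  -- Step 2: pointwise formula for the entry
  have h2 : ∀ x ∈ Set.Ioi (0 : ℝ),
      (NormedSpace.exp ((x : ℂ) • Amat N a) * Tmat N ν δ x *
        NormedSpace.exp ((x : ℂ) • (Amat N a)ᵀ)) i j = ∑ r ∈ Finset.range N, g r x := by
    intro x hx
    rw [Set.mem_Ioi] at hx
    rw [Matrix.mul_apply]
    have hterm : ∀ r : Fin N,
        (NormedSpace.exp ((x : ℂ) • Amat N a) * Tmat N ν δ x) i r *
          (NormedSpace.exp ((x : ℂ) • (Amat N a)ᵀ)) r j = g (r : ℕ) x := by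
      intro r
      rw [Tmat, Matrix.mul_diagonal, expA_apply, expAT_apply]
      by_cases hrm : (r : ℕ) + 1 ≤ m
      · have hri : (r : ℕ) ≤ I := by omega
        have hrj : (r : ℕ) ≤ J := by omega
        rw [if_pos hri, if_pos hrj, hg]
        simp only [if_pos hrm]
        have hpow : x ^ ((I - (r : ℕ) : ℕ)) * x ^ ((J - (r : ℕ) : ℕ)) *
            x ^ (ν + ((r : ℕ) : ℝ) + 1) = x ^ (sr (r : ℕ) - 1) := by
          rw [← Real.rpow_natCast x (I - (r : ℕ)), ← Real.rpow_natCast x (J - (r : ℕ)),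
            ← Real.rpow_add hx, ← Real.rpow_add hx]
          congr 1
          rw [Nat.cast_sub hri, Nat.cast_sub hrj, hsr]
          ring
        have hfac1 : ((Nat.factorial (I - (r : ℕ)) : ℝ)) ≠ 0 := by
          exact_mod_cast (Nat.factorial_pos _).ne'
        have hfac2 : ((Nat.factorial (J - (r : ℕ)) : ℝ)) ≠ 0 := by
          exact_mod_cast (Nat.factorial_pos _).ne'
        push_cast [← hpow, hc]
        field_simp
        ring
      · rw [hg]
        simp only [if_neg hrm]
        by_cases hri : (r : ℕ) ≤ I
        · have hrj : ¬ ((r : ℕ) ≤ J) := by omega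
          rw [if_neg hrj, mul_zero]
        · rw [if_neg hri, zero_mul, zero_mul]
    calc ∑ r : Fin N, (NormedSpace.exp ((x : ℂ) • Amat N a) * Tmat N ν δ x) i r *
          (NormedSpace.exp ((x : ℂ) • (Amat N a)ᵀ)) r j
        = ∑ r : Fin N, g (r : ℕ) x := Finset.sum_congr rfl (fun r _ => hterm r)
      _ = ∑ r ∈ Finset.range N, g r x := Fin.sum_univ_eq_sum_range (fun r => g r x) N
  rw [setIntegral_congr_fun measurableSet_Ioi h2]
  -- Step 3: integrability of each g r and swap
  have hpos : ∀ r : ℕ, r + 1 ≤ m → 0 < sr r := by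
    intro r hr
    have h1 : (r : ℝ) ≤ I := by exact_mod_cast Nat.cast_le.2 (by omega : r ≤ I)
    have h2 : (0:ℝ) ≤ J := Nat.cast_nonneg _
    simp only [hsr]; linarith
  have hintg : ∀ r ∈ Finset.range N, IntegrableOn (g r) (Set.Ioi 0) := by
    intro r _
    by_cases hrm : r + 1 ≤ m
    · have : IntegrableOn (fun x : ℝ => c r * (Real.exp (-x) * x ^ (sr r - 1)))
          (Set.Ioi 0) := (Real.GammaIntegral_convergent (hpos r hrm)).const_mul _
      have := this.ofReal (𝕜 := ℂ)
      simpa [hg, if_pos hrm, show r < m by omega, IntegrableOn] using this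
    · simp only [hg, if_neg hrm]
      exact integrableOn_zero
  rw [integral_finset_sum _ hintg]
  -- Step 4: evaluate each integral
  have h4 : ∀ r, r + 1 ≤ m → ∫ x in Set.Ioi (0:ℝ), g r x = ((c r * Real.Gamma (sr r) : ℝ) : ℂ) := by
    intro r hrm
    simp only [hg, if_pos hrm]
    have hcoe : ∫ x in Set.Ioi (0:ℝ), ((c r * (Real.exp (-x) * x ^ (sr r - 1)) : ℝ) : ℂ)
        = (((∫ x in Set.Ioi (0:ℝ), c r * (Real.exp (-x) * x ^ (sr r - 1))) : ℝ) : ℂ) :=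
      integral_ofReal
    rw [hcoe]
    congr 1
    rw [MeasureTheory.integral_const_mul, ← Real.Gamma_eq_integral (hpos r hrm)]
  have h5 : ∀ r, ¬ (r + 1 ≤ m) → ∫ x in Set.Ioi (0:ℝ), g r x = 0 := by
    intro r hrm
    simp only [hg, if_neg hrm, integral_zero]
  -- Step 5: reduce to sum over range m
  have hsub : Finset.range m ⊆ Finset.range N := by
    apply Finset.range_subset_range.2
    have := i.isLt
    omega
  rw [show ∑ r ∈ Finset.range N, ∫ x in Set.Ioi (0:ℝ), g r x
      = ∑ r ∈ Finset.range m, ∫ x in Set.Ioi (0:ℝ), g r x from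
    (Finset.sum_subset hsub (fun r _ hr => h5 r (by
      rw [Finset.mem_range] at hr; omega))).symm]
  refine Finset.sum_congr rfl (fun r hr => ?_)
  rw [Finset.mem_range] at hr
  rw [h4 r (by omega)]
  norm_cast
  have harg : ν + ((I : ℝ) + 1) + ((J : ℝ) + 1) - ((r : ℝ) + 1) + 1 = sr r := by
    simp only [hsr]; ring
  push_cast
  rw [harg]
end
end
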